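/- arXiv:1107.4130 — 3 statements merged into one kernel-verified Lean document; each statement's English description precedes it below -/
import Mathlib

section
/- Assume p ≡ 3 (mod 4). Then there exist an odd natural number n with (p − 1)/2 dividing n² − 1, an element λ ∈ K̄ of order 2, and c ∈ N such that λ(z) = c·zⁿ for all z ∈ R, λ(z) = c⁻¹·zⁿ for all z ∈ N, and cⁿ = c. -/
instance (X : Type*) [DecidableEq X] : DecidableEq (OnePoint X) :=
  inferInstanceAs (DecidableEq (Option X))

/-- The translation `z ↦ z + a` on `ℤ/p ∪ {∞}`, fixing `∞`. -/
def ptrans (p : ℕ) (a : ZMod p) : Equiv.Perm (OnePoint (ZMod p)) :=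
  Equiv.optionCongr (Equiv.addRight a)

/-- The map `z ↦ a z` on `ℤ/p ∪ {∞}`, fixing `∞`, for `a ≠ 0`. -/
def pmul (p : ℕ) [Fact p.Prime] (a : ZMod p) (ha : a ≠ 0) : Equiv.Perm (OnePoint (ZMod p)) :=
  Equiv.optionCongr (Equiv.mulLeft₀ a ha)

/-- Multiplication by `a` extended to `ℤ/p ∪ {∞}` (with `a·∞ = ∞`). -/
def opSmul (p : ℕ) (a : ZMod p) : OnePoint (ZMod p) → OnePoint (ZMod p) :=
  fun x => Option.map (fun z => a * z) x

/-- Underlying function of the map `z ↦ -1/z`. -/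
def negInvFun (p : ℕ) : OnePoint (ZMod p) → OnePoint (ZMod p)
  | Option.none => Option.some (0 : ZMod p)
  | Option.some z => if z = 0 then Option.none else Option.some (-z⁻¹ : ZMod p)

/-- The permutation `z ↦ -1/z` of `ℤ/p ∪ {∞}` (sending `0 ↦ ∞` and `∞ ↦ 0`). -/
def negInvPerm (p : ℕ) [Fact p.Prime] : Equiv.Perm (OnePoint (ZMod p)) :=
  Function.Involutive.toPerm (negInvFun p) (by
    intro x
    match x with
    | Option.none => simp [negInvFun] <;> rfl
    | Option.some z =>
      by_cases hz : z = 0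
      · simp [negInvFun, hz] <;> rfl
      · have h1 : (-z⁻¹ : ZMod p) ≠ 0 := by simp [hz]
        simp [negInvFun, hz, h1, inv_neg, inv_inv] <;> rfl)

/-- The involution `(0 ∞)(1 3)(2 6)(4 5)`. -/
def inv1 (p : ℕ) : Equiv.Perm (OnePoint (ZMod p)) :=
  Equiv.swap ((0 : ZMod p) : OnePoint (ZMod p)) OnePoint.infty *
  Equiv.swap ((1 : ZMod p) : OnePoint (ZMod p)) ((3 : ZMod p) : OnePoint (ZMod p)) *
  Equiv.swap ((2 : ZMod p) : OnePoint (ZMod p)) ((6 : ZMod p) : OnePoint (ZMod p)) *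
  Equiv.swap ((4 : ZMod p) : OnePoint (ZMod p)) ((5 : ZMod p) : OnePoint (ZMod p))

/-- The involution `(0 ∞)(1 5)(2 3)(4 6)`. -/
def inv2 (p : ℕ) : Equiv.Perm (OnePoint (ZMod p)) :=
  Equiv.swap ((0 : ZMod p) : OnePoint (ZMod p)) OnePoint.infty *
  Equiv.swap ((1 : ZMod p) : OnePoint (ZMod p)) ((5 : ZMod p) : OnePoint (ZMod p)) *
  Equiv.swap ((2 : ZMod p) : OnePoint (ZMod p)) ((3 : ZMod p) : OnePoint (ZMod p)) *
  Equiv.swap ((4 : ZMod p) : OnePoint (ZMod p)) ((6 : ZMod p) : OnePoint (ZMod p))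

/-- The set of nonzero squares in `ℤ/p`. -/
def Rset (p : ℕ) : Set (ZMod p) := {a | a ≠ 0 ∧ IsSquare a}

/-- The set of nonsquares in `(ℤ/p)*`. -/
def Nset (p : ℕ) : Set (ZMod p) := {a | a ≠ 0 ∧ ¬ IsSquare a}

set_option linter.unusedSectionVars false
open Equiv MulAction
section
variable (p : ℕ) [Fact p.Prime]
lemma ptrans_infty (a : ZMod p) : ptrans p a OnePoint.infty = OnePoint.infty := rfl
lemma ptrans_some (a z : ZMod p) : ptrans p a (OnePoint.some z) = OnePoint.some (z + a) := rfl
lemma pmul_infty (a : ZMod p) (ha : a ≠ 0) : pmul p a ha OnePoint.infty = OnePoint.infty := rfl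
lemma pmul_some (a : ZMod p) (ha : a ≠ 0) (z : ZMod p) :
    pmul p a ha (OnePoint.some z) = OnePoint.some (a * z) := rfl
lemma ptrans_mul (a b : ZMod p) : ptrans p a * ptrans p b = ptrans p (a + b) := by
  ext x
  cases x with
  | infty => rfl
  | coe z => show OnePoint.some (z + b + a) = OnePoint.some (z + (a+b)); rw [add_assoc, add_comm b a]
lemma pmul_mul (a b : ZMod p) (ha : a ≠ 0) (hb : b ≠ 0) :
    pmul p a ha * pmul p b hb = pmul p (a*b) (mul_ne_zero ha hb) := by
  ext x
  cases x with
  | infty => rfl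
  | coe z => show OnePoint.some (a * (b * z)) = OnePoint.some (a * b * z); rw [mul_assoc]
lemma pmul_eq_of (a b : ZMod p) (ha : a ≠ 0) (hb : b ≠ 0) (h : a = b) : pmul p a ha = pmul p b hb := by
  subst h; rfl
lemma pmul_inj (a b : ZMod p) (ha : a ≠ 0) (hb : b ≠ 0) (h : pmul p a ha = pmul p b hb) : a = b := by
  have := congrArg (fun f : Equiv.Perm (OnePoint (ZMod p)) => f (OnePoint.some 1)) h
  simpa [pmul_some] using this
lemma pmul_one' : pmul p 1 one_ne_zero = 1 := by
  ext x; cases x with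
  | infty => rfl
  | coe z => show OnePoint.some (1 * z) = OnePoint.some z; rw [one_mul]
lemma pmul_pow (a : ZMod p) (ha : a ≠ 0) (k : ℕ) :
    (pmul p a ha) ^ k = pmul p (a ^ k) (pow_ne_zero k ha) := by
  induction k with
  | zero => simpa using (pmul_one' p).symm
  | succ k ih =>
    rw [pow_succ, ih, pmul_mul]
    exact pmul_eq_of p _ _ _ _ (pow_succ a k).symm
lemma pmul_inv (a : ZMod p) (ha : a ≠ 0) :
    (pmul p a ha)⁻¹ = pmul p a⁻¹ (inv_ne_zero ha) := by
  refine inv_eq_of_mul_eq_one_right ?_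
  rw [pmul_mul]
  rw [show pmul p (a * a⁻¹) _ = pmul p 1 one_ne_zero from pmul_eq_of p _ _ _ _ (mul_inv_cancel₀ ha)]
  exact pmul_one' p
end

open Equiv MulAction

lemma card_arith (p : ℕ) (hp3 : p % 4 = 3) : (p^3 - p)/2 = (p+1)*(p*((p-1)/2)) := by
  obtain ⟨j, rfl⟩ : ∃ j, p = 4*j+3 := ⟨p/4, by omega⟩
  have hd : (4*j+3-1)/2 = 2*j+1 := by omega
  rw [hd]
  have h1 : (4*j+3)^3 = ((4*j+3+1)*((4*j+3)*(2*j+1)))*2 + (4*j+3) := by ring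
  rw [h1, Nat.add_sub_cancel, Nat.mul_div_cancel]
  omega

lemma stab_card (p : ℕ) [Fact p.Prime]
    (G : Subgroup (Perm (OnePoint (ZMod p))))
    (htrans : ∀ x y : OnePoint (ZMod p), ∃ g ∈ G, g x = y)
    (hcardG : Nat.card G = (p+1) * (p * ((p-1)/2))) (x : OnePoint (ZMod p)) :
    Nat.card (stabilizer G x) = p * ((p-1)/2) := by
  letI := Fintype.ofFinite (G : Subgroup (Perm (OnePoint (ZMod p))))
  letI := Fintype.ofFinite (orbit G x)
  have horb : orbit G x = Set.univ := by
    ext y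
    simp only [Set.mem_univ, iff_true]
    obtain ⟨g, hg, hgx⟩ := htrans x y
    exact MulAction.mem_orbit_iff.mpr ⟨⟨g, hg⟩, hgx⟩
  have h1 : Nat.card (orbit G x) = p + 1 := by
    rw [horb]
    rw [Nat.card_congr (Equiv.Set.univ _), Nat.card_eq_fintype_card]
    simp [OnePoint, ZMod.card]
    exact (Fintype.card_congr (Equiv.refl _)).trans ((Fintype.card_option (α := ZMod p)).trans (by rw [ZMod.card]))
  have h2 := MulAction.card_orbit_mul_card_stabilizer_eq_card_group G x
  rw [← Nat.card_eq_fintype_card, ← Nat.card_eq_fintype_card, ← Nat.card_eq_fintype_card] at h2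
  rw [h1, hcardG] at h2
  exact Nat.eq_of_mul_eq_mul_left (by omega) h2

section
variable (p : ℕ) [Fact p.Prime]

lemma ptrans_zero : ptrans p 0 = 1 := by
  ext x; cases x with
  | infty => rfl
  | coe z => show OnePoint.some (z + 0) = OnePoint.some z; rw [add_zero]

lemma ptrans_injective : Function.Injective (ptrans p) := by
  intro a b h
  have := congrArg (fun f : Equiv.Perm (OnePoint (ZMod p)) => f (OnePoint.some 0)) h
  simpa [ptrans_some] using this

open Equiv MulAction Subgroup in
lemma trans_conj (hp2 : p ≠ 2)
    (S : Subgroup (Perm (OnePoint (ZMod p))))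
    (hS : Nat.card S = p * ((p-1)/2))
    (hTS : ∀ a : ZMod p, ptrans p a ∈ S) :
    ∀ g ∈ S, ∀ a : ZMod p, ∃ b : ZMod p, g * ptrans p a * g⁻¹ = ptrans p b := by
  have hp := (Fact.out : p.Prime)
  have hp3 : 3 ≤ p := by
    rcases hp.eq_two_or_odd with h | h
    · exact absurd h hp2
    · have := hp.two_le; omega
  set d := (p-1)/2 with hd
  have hd0 : 0 < d := by omega
  have hdp : d < p := by omega
  -- the homomorphism
  let θ : Multiplicative (ZMod p) →* S :=
    { toFun := fun a => ⟨ptrans p a.toAdd, hTS _⟩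
      map_one' := by
        ext1
        exact ptrans_zero p
      map_mul' := by
        intro a b
        ext1
        exact (ptrans_mul p _ _).symm }
  have hθinj : Function.Injective θ := by
    intro a b h
    have : ptrans p a.toAdd = ptrans p b.toAdd := congrArg Subtype.val h
    exact ptrans_injective p this
  let T' : Subgroup S := θ.range
  have hcardT : Nat.card T' = p := by
    rw [Nat.card_congr (MonoidHom.ofInjective hθinj).toEquiv.symm]
    simp [Nat.card_eq_fintype_card, ZMod.card]
  have hfact : (Nat.card S).factorization p = 1 := by
    rw [hS]
    rw [Nat.factorization_mul (hp.ne_zero) (by omega)]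
    simp [hp.factorization]
    exact Nat.factorization_eq_zero_of_not_dvd (fun hdvd => by
      have := Nat.le_of_dvd hd0 hdvd; omega)
  have hcardT' : Nat.card T' = p ^ (Nat.card S).factorization p := by
    rw [hfact, pow_one]; exact hcardT
  let P : Sylow p S := Sylow.ofCard T' hcardT'
  have hindex : P.toSubgroup.index = d := by
    have h1 := Subgroup.card_mul_index P.toSubgroup
    rw [Sylow.coe_ofCard] at h1 ⊢
    rw [hcardT, hS] at h1
    exact Nat.eq_of_mul_eq_mul_left hp.pos h1
  have hsyl1 : Nat.card (Sylow p S) = 1 := by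
    have h1 : Nat.card (Sylow p S) ∣ d := hindex ▸ P.card_dvd_index
    have h2 : Nat.card (Sylow p S) ≡ 1 [MOD p] := card_sylow_modEq_one p S
    have h3 : Nat.card (Sylow p S) ≤ d := Nat.le_of_dvd hd0 h1
    have h4 : 0 < Nat.card (Sylow p S) := Nat.card_pos
    have h5 := h2.eq_of_lt_of_lt (by omega) (by omega)
    omega
  have hss : Subsingleton (Sylow p S) := by
    rcases Nat.card_eq_one_iff_exists.mp hsyl1 with ⟨x, hx⟩
    exact ⟨fun a b => (hx a).trans (hx b).symm⟩
  have hnorm : T'.Normal := by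
    have : P.toSubgroup.Normal := by
      rw [← Subgroup.normalizer_eq_top_iff]
      rw [eq_top_iff]
      intro g _
      refine Sylow.smul_eq_iff_mem_normalizer.mp ?_
      exact Subsingleton.elim _ _
    rwa [Sylow.coe_ofCard] at this
  intro g hg a
  have hmem : (⟨g, hg⟩ : S) * ⟨ptrans p a, hTS a⟩ * (⟨g, hg⟩ : S)⁻¹ ∈ T' := by
    exact hnorm.conj_mem _ ⟨a, rfl⟩ _
  obtain ⟨b, hb⟩ := hmem
  refine ⟨Multiplicative.toAdd b, ?_⟩
  have := congrArg Subtype.val hb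
  exact this.symm
end

section
variable (p : ℕ) [Fact p.Prime]

open Equiv MulAction Subgroup in
lemma stab_both_struct (hp2 : p ≠ 2)
    (S : Subgroup (Perm (OnePoint (ZMod p))))
    (hS : Nat.card S = p * ((p-1)/2))
    (hTS : ∀ a : ZMod p, ptrans p a ∈ S)
    (h : Perm (OnePoint (ZMod p))) (hh : h ∈ S)
    (hinf : h OnePoint.infty = OnePoint.infty)
    (h0 : h (OnePoint.some (0:ZMod p)) = OnePoint.some (0:ZMod p)) :
    ∃ (b : ZMod p) (hb : b ≠ 0), h = pmul p b hb := by
  have hp := (Fact.out : p.Prime)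
  haveI : Fact (1 < p) := ⟨hp.one_lt⟩
  obtain ⟨b, hb⟩ := trans_conj p hp2 S hS hTS h hh 1
  have hstep : ∀ x, h (ptrans p 1 x) = ptrans p b (h x) := by
    intro x
    have := congrArg (fun f : Perm (OnePoint (ZMod p)) => f (h x)) hb
    simpa using this
  have hnat : ∀ k : ℕ, h (OnePoint.some ((k : ZMod p))) = OnePoint.some (b * k) := by
    intro k
    induction k with
    | zero => simpa using h0
    | succ k ih =>
      have h1 : ((((k:ℕ) + 1 : ℕ)) : ZMod p) = (k : ZMod p) + 1 := by push_cast; ring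
      rw [h1, show (OnePoint.some ((k:ZMod p)+1)) = ptrans p 1 (OnePoint.some (k:ZMod p)) from rfl,
        hstep, ih, ptrans_some]
      congr 1
      push_cast; ring
  have hall : ∀ z : ZMod p, h (OnePoint.some z) = OnePoint.some (b * z) := by
    intro z
    have hz : ((z.val : ℕ) : ZMod p) = z := by
      rw [ZMod.natCast_val, ZMod.cast_id]
    rw [← hz]; exact hnat z.val
  have hbne : b ≠ 0 := by
    intro h'
    have h1 := hall 1
    rw [h', zero_mul] at h1
    have := h.injective (h1.trans h0.symm)
    simp at this
  refine ⟨b, hbne, ?_⟩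
  ext x
  cases x with
  | infty => exact hinf
  | coe z => exact hall z

open Subgroup in
lemma exists_gen (hp2 : p ≠ 2) :
    ∃ g₀ : ZMod p, g₀ ≠ 0 ∧ orderOf g₀ = (p-1)/2 ∧ g₀ ^ ((p-1)/2) = 1 ∧
      (∀ b : ZMod p, b ≠ 0 → b ^ ((p-1)/2) = 1 → ∃ k : ℕ, b = g₀ ^ k) := by
  have hp := (Fact.out : p.Prime)
  have hp3 : 3 ≤ p := by
    rcases hp.eq_two_or_odd with h | h
    · exact absurd h hp2
    · have := hp.two_le; omega
  have hpodd : p % 2 = 1 := hp.eq_two_or_odd.resolve_left hp2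
  set d := (p-1)/2 with hd
  have hd2 : p - 1 = 2 * d := by omega
  obtain ⟨ζ, hζ⟩ := IsCyclic.exists_generator (α := (ZMod p)ˣ)
  have hordζ : orderOf ζ = p - 1 := by
    rw [orderOf_eq_card_of_forall_mem_zpowers hζ, Nat.card_eq_fintype_card, ZMod.card_units]
  have hgcd : Nat.gcd (p-1) 2 = 2 := by
    rw [hd2]
    simpa using Nat.gcd_mul_left 2 d 1
  have hordu : orderOf (ζ^2) = d := by
    rw [orderOf_pow, hordζ, hgcd]
  have hpow1 : (ζ^2)^d = 1 := by
    rw [← hordu]; exact pow_orderOf_eq_one _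
  refine ⟨((ζ^2 : (ZMod p)ˣ) : ZMod p), Units.ne_zero _, ?_, ?_, ?_⟩
  · rw [orderOf_units]; exact hordu
  · rw [← Units.val_pow_eq_pow_val, hpow1, Units.val_one]
  · intro b hb hbd
    have hmem : Units.mk0 b hb ∈ Submonoid.powers ζ := by
      have : IsOfFinOrder ζ := isOfFinOrder_of_finite ζ
      exact this.mem_powers_iff_mem_zpowers.mpr (hζ _)
    obtain ⟨m, hm'⟩ := hmem
    have hm : ζ ^ m = Units.mk0 b hb := hm'
    have hcast : (ζ : ZMod p) ^ m = b := by
      rw [← Units.val_pow_eq_pow_val, hm, Units.val_mk0]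
    have hu1 : (ζ^m)^d = 1 := by
      apply Units.ext
      push_cast
      rw [hcast, hbd]
    have hdvd : (p-1) ∣ m * d := by
      rw [← hordζ]
      apply orderOf_dvd_of_pow_eq_one
      rw [pow_mul]
      exact hu1
    have hm2 : 2 ∣ m := by
      obtain ⟨t, ht⟩ := hdvd
      rw [hd2] at ht
      have hd0 : 0 < d := by omega
      have : m = 2 * t := by
        have := Nat.eq_of_mul_eq_mul_right hd0 (by linarith [ht] : m * d = (2*t) * d)
        omega
      omega
    obtain ⟨t, rfl⟩ := hm2
    refine ⟨t, ?_⟩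
    rw [← hcast]
    push_cast
    ring
end

section
variable (p : ℕ) [Fact p.Prime]

lemma root_pow_mod (a : ZMod p) (k : ℕ) (ha : a ^ k = 1) (n : ℕ) : a ^ n = a ^ (n % k) := by
  conv_lhs => rw [← Nat.div_add_mod n k]
  rw [pow_add, pow_mul, ha, one_pow, one_mul]

lemma mem_Rset_iff (hp2 : p ≠ 2) (a : ZMod p) : a ∈ Rset p ↔ (a ≠ 0 ∧ a ^ ((p-1)/2) = 1) := by
  have hp := (Fact.out : p.Prime)
  have hpd : p / 2 = (p-1)/2 := by
    have := hp.two_le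
    rcases hp.eq_two_or_odd with h | h
    · exact absurd h hp2
    · omega
  constructor
  · rintro ⟨ha, hsq⟩
    exact ⟨ha, by rw [← hpd]; exact (ZMod.euler_criterion p ha).mp hsq⟩
  · rintro ⟨ha, hpow⟩
    exact ⟨ha, (ZMod.euler_criterion p ha).mpr (by rwa [hpd])⟩

lemma mem_Nset_iff (hp2 : p ≠ 2) (a : ZMod p) : a ∈ Nset p ↔ a ^ ((p-1)/2) = -1 := by
  have hp := (Fact.out : p.Prime)
  haveI : Fact (1 < p) := ⟨hp.one_lt⟩
  have hp3 : 3 ≤ p := by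
    rcases hp.eq_two_or_odd with h | h
    · exact absurd h hp2
    · have := hp.two_le; omega
  have hpodd : p % 2 = 1 := hp.eq_two_or_odd.resolve_left hp2
  have hpd : p / 2 = (p-1)/2 := by omega
  have hne : (-1 : ZMod p) ≠ 1 := by
    intro h
    have : ((2:ℕ) : ZMod p) = 0 := by push_cast; linear_combination -h
    rw [ZMod.natCast_eq_zero_iff] at this
    have := Nat.le_of_dvd (by norm_num) this
    omega
  constructor
  · rintro ⟨ha, hsq⟩
    have := (ZMod.pow_div_two_eq_neg_one_or_one p ha).resolve_left
      (fun h => hsq ((ZMod.euler_criterion p ha).mpr h))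
    rwa [hpd] at this
  · intro h
    have hm1 : (-1 : ZMod p) ≠ 0 := by
      intro hh
      have : (1 : ZMod p) = 0 := by linear_combination -hh
      simpa using this
    have ha : a ≠ 0 := by
      intro h0
      rw [h0, zero_pow (by omega : (p-1)/2 ≠ 0)] at h
      exact hm1 h.symm
    refine ⟨ha, fun hsq => ?_⟩
    have h1 := (ZMod.euler_criterion p ha).mp hsq
    rw [hpd] at h1
    rw [h1] at h
    exact hne h.symm

open Equiv MulAction Subgroup in
lemma stab_subgroupOf (S : Subgroup (Perm (OnePoint (ZMod p)))) (x : OnePoint (ZMod p)) :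
    (S ⊓ stabilizer (Perm (OnePoint (ZMod p))) x).subgroupOf S = stabilizer S x := by
  ext g
  rw [Subgroup.mem_subgroupOf, Subgroup.mem_inf, MulAction.mem_stabilizer_iff,
    MulAction.mem_stabilizer_iff]
  have : (g : Perm (OnePoint (ZMod p))) • x = g • x := rfl
  rw [this]
  exact ⟨fun h => h.2, fun h => ⟨g.2, h⟩⟩

open Equiv MulAction Subgroup in
lemma card_stab_eq (S : Subgroup (Perm (OnePoint (ZMod p)))) (x : OnePoint (ZMod p)) :
    Nat.card (S ⊓ stabilizer (Perm (OnePoint (ZMod p))) x : Subgroup _) = Nat.card (stabilizer S x) := by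
  rw [← stab_subgroupOf]
  exact (Nat.card_congr (Subgroup.subgroupOfEquivOfLe inf_le_left).toEquiv).symm

open Equiv MulAction Subgroup in
lemma orbit_zero_of_fix_infty (S : Subgroup (Perm (OnePoint (ZMod p))))
    (hTS : ∀ a : ZMod p, ptrans p a ∈ S)
    (hfix : ∀ g ∈ S, g OnePoint.infty = OnePoint.infty) :
    orbit S (OnePoint.some (0:ZMod p)) = Set.range OnePoint.some := by
  ext y
  constructor
  · rintro ⟨g, rfl⟩
    show (g : Perm (OnePoint (ZMod p))) (OnePoint.some (0:ZMod p)) ∈ Set.range OnePoint.some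
    rcases h : (g : Perm (OnePoint (ZMod p))) (OnePoint.some (0:ZMod p)) with _ | z
    · exfalso
      have h2 := hfix g g.2
      have := (g : Perm (OnePoint (ZMod p))).injective (h.trans h2.symm)
      exact Option.some_ne_none _ this
    · exact ⟨z, rfl⟩
  · rintro ⟨z, rfl⟩
    refine ⟨⟨ptrans p z, hTS z⟩, ?_⟩
    show ptrans p z (OnePoint.some 0) = OnePoint.some z
    rw [ptrans_some, zero_add]
end

lemma solve_lin_int (d A B σ : ℤ) (hodd : ¬ (2:ℤ) ∣ d) (hd0 : d ≠ 0)
    (hAB : A - B = 2 ∨ B - A = 2)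
    (h : d ∣ σ * B) : ∃ k : ℤ, d ∣ k * A + σ := by
  set g : ℕ := Int.gcd A d with hg
  have hgd : (g:ℤ) ∣ d := Int.gcd_dvd_right A d
  have hgA : (g:ℤ) ∣ A := Int.gcd_dvd_left A d
  have hg0 : (g:ℤ) ≠ 0 := by
    simp only [ne_eq, Int.natCast_eq_zero, hg, Int.gcd_eq_zero_iff]
    rintro ⟨-, rfl⟩; exact hd0 rfl
  have hcop : IsCoprime (g:ℤ) B := by
    rw [Int.isCoprime_iff_gcd_eq_one]
    by_contra hne
    obtain ⟨q, hq, hqdvd⟩ := Nat.exists_prime_and_dvd hne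
    have hqg : (q:ℤ) ∣ (g:ℤ) := (Int.natCast_dvd_natCast.mpr hqdvd).trans (Int.gcd_dvd_left _ _)
    have hqB : (q:ℤ) ∣ B := (Int.natCast_dvd_natCast.mpr hqdvd).trans (Int.gcd_dvd_right _ _)
    have hqA : (q:ℤ) ∣ A := hqg.trans hgA
    have hq2 : (q:ℤ) ∣ 2 := by
      rcases hAB with h2 | h2
      · exact h2 ▸ dvd_sub hqA hqB
      · exact h2 ▸ dvd_sub hqB hqA
    have hq2' : q ∣ 2 := by exact_mod_cast hq2
    have hqeq : q = 2 := (Nat.prime_dvd_prime_iff_eq hq Nat.prime_two).mp hq2'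
    have hqd : (q:ℤ) ∣ d := hqg.trans hgd
    rw [hqeq] at hqd
    exact hodd (by exact_mod_cast hqd)
  have hgσ : (g:ℤ) ∣ σ := hcop.dvd_of_dvd_mul_right (hgd.trans h)
  obtain ⟨σ', hσ'⟩ := hgσ
  refine ⟨-(Int.gcdA A d * σ'), ?_⟩
  have hbez : (g:ℤ) = A * Int.gcdA A d + d * Int.gcdB A d := Int.gcd_eq_gcd_ab A d
  have : -(Int.gcdA A d * σ') * A + σ = d * (Int.gcdB A d * σ') := by
    rw [hσ', hbez]; ring
  rw [this]
  exact ⟨_, rfl⟩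

lemma solve_lin_nat (d A σ : ℕ) (B : ℤ) (hd0 : 0 < d) (hodd : d % 2 = 1)
    (hAB : (A:ℤ) - B = 2 ∨ B - (A:ℤ) = 2)
    (h : (d:ℤ) ∣ σ * B) : ∃ k : ℕ, d ∣ k * A + σ := by
  obtain ⟨k', hk'⟩ := solve_lin_int d A B σ (by omega) (by omega) hAB h
  refine ⟨(k' % d).toNat, ?_⟩
  have hdz : (0:ℤ) < d := by exact_mod_cast hd0
  have hk2 : (((k' % d).toNat : ℤ)) = k' % d := Int.toNat_of_nonneg (Int.emod_nonneg _ (by omega))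
  have hint : (d:ℤ) ∣ ((k' % d).toNat : ℤ) * A + σ := by
    rw [hk2]
    have hmod : (k' % d) * A + σ = (k' * A + σ) - d * ((k' / d) * A) := by
      rw [Int.emod_def]; ring
    rw [hmod]
    exact dvd_sub hk' ⟨(k'/d)*A, rfl⟩
  exact_mod_cast hint

lemma pow_mod_inj (p : ℕ) [Fact p.Prime] (d : ℕ) (hd0 : 0 < d) (a : ZMod p) (ha : a ≠ 0)
    (hord : orderOf a = d) (had : a ^ d = 1) {m k : ℕ} (h : a ^ m = a ^ k) : m ≡ k [MOD d] := by
  have main : ∀ u v : ℕ, u % d ≤ v % d → a ^ u = a ^ v → u % d = v % d := by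
    intro u v hle hh
    have h1 : a ^ (u % d) = a ^ (v % d) := by
      rw [← root_pow_mod p a d had u, ← root_pow_mod p a d had v, hh]
    have h2 : a ^ (u % d) * a ^ (v % d - u % d) = a ^ (u % d) * 1 := by
      rw [mul_one, ← pow_add]
      rw [show u % d + (v % d - u % d) = v % d by omega]
      exact h1.symm
    have h3 := mul_left_cancel₀ (pow_ne_zero _ ha) h2
    have h4 : orderOf a ∣ (v % d - u % d) := orderOf_dvd_of_pow_eq_one h3
    rw [hord] at h4
    have h5 : v % d < d := Nat.mod_lt _ hd0
    rcases Nat.eq_zero_or_pos (v % d - u % d) with h6 | h6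
    · omega
    · have := Nat.le_of_dvd h6 h4; omega
  rcases le_total (m % d) (k % d) with hle | hle
  · exact main m k hle h
  · exact (main k m hle h.symm).symm


set_option maxHeartbeats 1000000 in
open Equiv MulAction Subgroup in
theorem exists_lambda_power_form
    (p : ℕ) [Fact p.Prime] (hp2 : p ≠ 2) (hp3 : p % 4 = 3)
    (G : Subgroup (Equiv.Perm (OnePoint (ZMod p))))
    (htrans : ∀ x y : OnePoint (ZMod p), ∃ g ∈ G, g x = y)
    (hcard : Nat.card G = (p ^ 3 - p) / 2)
    (htransl : ∀ a : ZMod p, ptrans p a ∈ G) :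
    ∃ (n : ℕ) (lam : Equiv.Perm (OnePoint (ZMod p))) (c : ZMod p),
      Odd n ∧ (p - 1) / 2 ∣ n ^ 2 - 1 ∧
      lam ∈ G ∧ lam (OnePoint.some (0 : ZMod p)) = OnePoint.infty ∧
      lam OnePoint.infty = OnePoint.some (0 : ZMod p) ∧
      orderOf lam = 2 ∧ c ∈ Nset p ∧
      (∀ z ∈ Rset p, lam (OnePoint.some z) = OnePoint.some (c * z ^ n)) ∧
      (∀ z ∈ Nset p, lam (OnePoint.some z) = OnePoint.some (c⁻¹ * z ^ n)) ∧
      c ^ n = c := by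
  classical
  have hp := (Fact.out : p.Prime)
  haveI : Fact (1 < p) := ⟨hp.one_lt⟩
  have hpodd : p % 2 = 1 := hp.eq_two_or_odd.resolve_left hp2
  set d : ℕ := (p-1)/2 with hdd
  have hd_odd : d % 2 = 1 := by omega
  have hd0 : 0 < d := by omega
  have hdp : d < p := by omega
  have hG' : Nat.card G = (p+1)*(p*d) := by rw [hcard, card_arith p hp3]
  -- the stabilizer subgroups
  have hstabcard : ∀ x : OnePoint (ZMod p),
      Nat.card (G ⊓ stabilizer (Perm (OnePoint (ZMod p))) x : Subgroup _) = p * d := by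
    intro x
    rw [card_stab_eq]
    exact stab_card p G htrans hG' x
  set Sinf : Subgroup (Perm (OnePoint (ZMod p))) :=
    G ⊓ stabilizer (Perm (OnePoint (ZMod p))) (OnePoint.infty : OnePoint (ZMod p)) with hSinfdef
  have hmemS : ∀ g, g ∈ Sinf ↔ g ∈ G ∧ g OnePoint.infty = OnePoint.infty := by
    intro g
    rw [hSinfdef, Subgroup.mem_inf, MulAction.mem_stabilizer_iff]
    rfl
  have hcardSinf : Nat.card Sinf = p * d := hstabcard _
  have hTSinf : ∀ a : ZMod p, ptrans p a ∈ Sinf :=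
    fun a => (hmemS _).mpr ⟨htransl a, rfl⟩
  -- no involution fixes a point
  have hmm : (p * d) % 2 = 1 := by rw [Nat.mul_mod, hpodd, hd_odd]
  have hnofix : ∀ g ∈ G, g * g = 1 → g ≠ 1 → ∀ x, g x ≠ x := by
    intro g hg hgg hg1 x hfix
    have hgK : g ∈ G ⊓ stabilizer (Perm (OnePoint (ZMod p))) x := ⟨hg, hfix⟩
    set K := G ⊓ stabilizer (Perm (OnePoint (ZMod p))) x with hK
    have h2 : (⟨g, hgK⟩ : K) ^ 2 = 1 := by
      apply Subtype.ext
      simpa [pow_two] using hgg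
    have hne1 : (⟨g, hgK⟩ : K) ≠ 1 := by
      simp only [ne_eq, Subtype.ext_iff]
      exact hg1
    haveI : Fact (Nat.Prime 2) := ⟨Nat.prime_two⟩
    have hord : orderOf (⟨g, hgK⟩ : K) = 2 := orderOf_eq_prime h2 hne1
    have hdvd := orderOf_dvd_natCard (⟨g, hgK⟩ : K)
    rw [hord, hstabcard x] at hdvd
    omega
  -- H = two-point stabilizer
  set Hsub : Subgroup (Perm (OnePoint (ZMod p))) :=
    Sinf ⊓ stabilizer (Perm (OnePoint (ZMod p))) (OnePoint.some (0:ZMod p)) with hHdef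
  have hmemH : ∀ g, g ∈ Hsub ↔ (g ∈ G ∧ g OnePoint.infty = OnePoint.infty ∧
      g (OnePoint.some (0:ZMod p)) = OnePoint.some (0:ZMod p)) := by
    intro g
    rw [hHdef, Subgroup.mem_inf, hmemS, MulAction.mem_stabilizer_iff]
    exact ⟨fun ⟨⟨a,b⟩,c⟩ => ⟨a,b,c⟩, fun ⟨a,b,c⟩ => ⟨⟨a,b⟩,c⟩⟩
  have hcardH : Nat.card Hsub = d := by
    have h1 : Nat.card Hsub = Nat.card (stabilizer Sinf (OnePoint.some (0:ZMod p))) := by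
      rw [hHdef]; exact card_stab_eq p Sinf _
    letI := Fintype.ofFinite Sinf
    letI := Fintype.ofFinite (orbit Sinf (OnePoint.some (0:ZMod p)))
    have h2 := MulAction.card_orbit_mul_card_stabilizer_eq_card_group Sinf
      (OnePoint.some (0:ZMod p))
    rw [← Nat.card_eq_fintype_card, ← Nat.card_eq_fintype_card, ← Nat.card_eq_fintype_card] at h2
    rw [orbit_zero_of_fix_infty p Sinf hTSinf (fun g hg => ((hmemS g).mp hg).2)] at h2
    have h3 : Nat.card (Set.range (OnePoint.some : ZMod p → OnePoint (ZMod p))) = p := by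
      have hinj : Function.Injective (OnePoint.some : ZMod p → OnePoint (ZMod p)) :=
        fun a b h => Option.some_injective _ h
      rw [Nat.card_range_of_injective hinj, Nat.card_eq_fintype_card, ZMod.card]
    rw [h3, hcardSinf] at h2
    rw [h1]
    exact Nat.eq_of_mul_eq_mul_left (by omega) h2
  -- every element of H is a pmul by a d-th root of 1
  have hHform : ∀ g, (hg : g ∈ Hsub) → ∃ b, ∃ (hb : b ≠ 0), b ^ d = 1 ∧ g = pmul p b hb := by
    intro g hg
    obtain ⟨hgG, hginf, hg0⟩ := (hmemH g).mp hg
    obtain ⟨b, hb, hform⟩ := stab_both_struct p hp2 Sinf hcardSinf hTSinf g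
      ((hmemS g).mpr ⟨hgG, hginf⟩) hginf hg0
    refine ⟨b, hb, ?_, hform⟩
    have hpow : g ^ d = 1 := by
      have h1 := pow_card_eq_one' (G := Hsub) (x := ⟨g, hg⟩)
      rw [hcardH] at h1
      have h2 := congrArg (Subtype.val) h1
      simpa using h2
    rw [hform, pmul_pow] at hpow
    exact pmul_inj p _ 1 _ one_ne_zero (hpow.trans (pmul_one' p).symm)
  -- generator
  obtain ⟨g₀, hg₀0, hordg₀, hg₀d, hg₀gen⟩ := exists_gen p hp2
  -- every d-th root of 1 gives a pmul in H
  have hpmulH : ∀ b, (hb : b ≠ 0) → b ^ d = 1 → pmul p b hb ∈ Hsub := by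
    have hSubCard : Nat.card {x : ZMod p // x ≠ 0 ∧ x ^ d = 1} ≤ d := by
      have hsurj : Function.Surjective
          (fun k : Fin d => (⟨g₀ ^ (k:ℕ), pow_ne_zero _ hg₀0, by
            rw [← pow_mul, mul_comm, pow_mul, hg₀d, one_pow]⟩ :
            {x : ZMod p // x ≠ 0 ∧ x ^ d = 1})) := by
        rintro ⟨x, hx0, hxd⟩
        obtain ⟨k, rfl⟩ := hg₀gen x hx0 hxd
        refine ⟨⟨k % d, Nat.mod_lt _ hd0⟩, Subtype.ext ?_⟩
        exact (root_pow_mod p g₀ d hg₀d k).symm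
      simpa using Nat.card_le_card_of_surjective _ hsurj
    choose bF hbF hbdF hformF using fun h : Hsub => hHform h.1 h.2
    set F : Hsub → {x : ZMod p // x ≠ 0 ∧ x ^ d = 1} :=
      fun h => ⟨bF h, hbF h, hbdF h⟩ with hFdef
    have hFinj : Function.Injective F := by
      intro h1 h2 hh
      have hbv : bF h1 = bF h2 := congrArg Subtype.val hh
      apply Subtype.ext
      rw [hformF h1, hformF h2]
      exact pmul_eq_of p _ _ _ _ hbv
    have hFcard : Nat.card Hsub ≤ Nat.card {x : ZMod p // x ≠ 0 ∧ x ^ d = 1} :=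
      Nat.card_le_card_of_injective _ hFinj
    have hFbij : Function.Bijective F :=
      (Nat.bijective_iff_injective_and_card _).mpr ⟨hFinj, by omega⟩
    intro b hb hbd
    obtain ⟨h, hh⟩ := hFbij.2 ⟨b, hb, hbd⟩
    have hbv : bF h = b := congrArg Subtype.val hh
    have heq : pmul p b hb = (h : Perm (OnePoint (ZMod p))) := by
      rw [hformF h]
      exact pmul_eq_of p _ _ _ _ hbv.symm
    rw [heq]
    exact h.2
  -- pmul membership in G
  have hpmulG : ∀ b, (hb : b ≠ 0) → b ^ d = 1 → pmul p b hb ∈ G :=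
    fun b hb hbd => ((hmemH _).mp (hpmulH b hb hbd)).1
  -- construct τ
  obtain ⟨τ, hτG, hτ0, hτinf⟩ : ∃ τ : Perm (OnePoint (ZMod p)), τ ∈ G ∧
      τ (OnePoint.some (0:ZMod p)) = OnePoint.infty ∧
      τ OnePoint.infty = OnePoint.some (0:ZMod p) := by
    obtain ⟨g₁, hg₁G, hg₁0⟩ := htrans (OnePoint.some (0:ZMod p)) OnePoint.infty
    rcases hw : g₁ OnePoint.infty with _ | u
    · exfalso
      have h1 : g₁ (OnePoint.some (0:ZMod p)) = g₁ OnePoint.infty := by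
        rw [hg₁0, hw]; rfl
      exact Option.some_ne_none _ (g₁.injective h1)
    · refine ⟨ptrans p (-u) * g₁, G.mul_mem (htransl _) hg₁G, ?_, ?_⟩
      · rw [Equiv.Perm.mul_apply, hg₁0, ptrans_infty]
      · rw [Equiv.Perm.mul_apply, hw]
        show ptrans p (-u) (OnePoint.some u) = _
        rw [ptrans_some, add_neg_cancel]
  have hτinv_inf : τ⁻¹ OnePoint.infty = OnePoint.some (0:ZMod p) := by
    have h1 := (Equiv.symm_apply_apply τ (OnePoint.some (0:ZMod p)) : τ⁻¹ (τ (OnePoint.some (0:ZMod p))) = OnePoint.some (0:ZMod p))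
    rwa [hτ0] at h1
  have hτinv_0 : τ⁻¹ (OnePoint.some (0:ZMod p)) = OnePoint.infty := by
    have h1 := (Equiv.symm_apply_apply τ OnePoint.infty : τ⁻¹ (τ OnePoint.infty) = OnePoint.infty)
    rwa [hτinf] at h1
  -- t := τ(1)
  obtain ⟨t, hτ1⟩ : ∃ t : ZMod p, τ (OnePoint.some (1:ZMod p)) = OnePoint.some t := by
    rcases hw : τ (OnePoint.some (1:ZMod p)) with _ | t
    · exfalso
      have h1 : τ (OnePoint.some (1:ZMod p)) = τ (OnePoint.some (0:ZMod p)) := by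
        rw [hτ0, hw]; rfl
      have h2 := τ.injective h1
      have h3 : (1 : ZMod p) = 0 := Option.some_injective _ h2
      exact one_ne_zero h3
    · exact ⟨t, rfl⟩
  have ht0 : t ≠ 0 := by
    intro h
    subst h
    have h1 : τ (OnePoint.some (1:ZMod p)) = τ OnePoint.infty := by rw [hτ1, hτinf]
    have h2 := τ.injective h1
    exact Option.some_ne_none _ h2
  -- conjugation by τ stabilizes H
  have hconjmem : ∀ b, (hb : b ≠ 0) → b ^ d = 1 → τ * pmul p b hb * τ⁻¹ ∈ Hsub := by
    intro b hb hbd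
    rw [hmemH]
    refine ⟨G.mul_mem (G.mul_mem hτG (hpmulG b hb hbd)) (G.inv_mem hτG), ?_, ?_⟩
    · rw [Equiv.Perm.mul_apply, Equiv.Perm.mul_apply, hτinv_inf, pmul_some, mul_zero, hτ0]
    · rw [Equiv.Perm.mul_apply, Equiv.Perm.mul_apply, hτinv_0, pmul_infty, hτinf]
  -- the conjugation exponent
  obtain ⟨e, he0, hed, heform⟩ := hHform _ (hconjmem g₀ hg₀0 hg₀d)
  obtain ⟨n₀, hn₀⟩ := hg₀gen e he0 hed
  have hg₀powd : ∀ k : ℕ, (g₀^k) ^ d = 1 := by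
    intro k
    rw [← pow_mul, mul_comm, pow_mul, hg₀d, one_pow]
  have hconjg₀ : τ * pmul p g₀ hg₀0 * τ⁻¹ = pmul p (g₀^n₀) (pow_ne_zero _ hg₀0) := by
    rw [heform]
    exact pmul_eq_of p _ _ _ _ hn₀
  have hconj_pow : ∀ k : ℕ, τ * pmul p (g₀^k) (pow_ne_zero _ hg₀0) * τ⁻¹
      = pmul p ((g₀^k)^n₀) (pow_ne_zero _ (pow_ne_zero _ hg₀0)) := by
    intro k
    induction k with
    | zero =>
      have h1 : pmul p (g₀^0) (pow_ne_zero 0 hg₀0) = 1 := by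
        rw [show pmul p (g₀^0) (pow_ne_zero 0 hg₀0) = pmul p 1 one_ne_zero from
          pmul_eq_of p _ _ _ _ (pow_zero g₀)]
        exact pmul_one' p
      have h2 : pmul p ((g₀^0)^n₀) (pow_ne_zero _ (pow_ne_zero 0 hg₀0)) = 1 := by
        rw [show pmul p ((g₀^0)^n₀) (pow_ne_zero _ (pow_ne_zero 0 hg₀0)) = pmul p 1 one_ne_zero from
          pmul_eq_of p _ _ _ _ (by rw [pow_zero, one_pow])]
        exact pmul_one' p
      rw [h1, h2, mul_one, mul_inv_cancel]
    | succ k ih =>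
      have hsplit : pmul p (g₀^(k+1)) (pow_ne_zero _ hg₀0)
          = pmul p (g₀^k) (pow_ne_zero _ hg₀0) * pmul p g₀ hg₀0 := by
        rw [pmul_mul]
        exact pmul_eq_of p _ _ _ _ (pow_succ g₀ k)
      calc τ * pmul p (g₀^(k+1)) (pow_ne_zero _ hg₀0) * τ⁻¹
          = (τ * pmul p (g₀^k) (pow_ne_zero _ hg₀0) * τ⁻¹) *
            (τ * pmul p g₀ hg₀0 * τ⁻¹) := by rw [hsplit]; group
        _ = pmul p ((g₀^k)^n₀) (pow_ne_zero _ (pow_ne_zero _ hg₀0)) *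
            pmul p (g₀^n₀) (pow_ne_zero _ hg₀0) := by rw [ih, hconjg₀]
        _ = pmul p ((g₀^(k+1))^n₀) (pow_ne_zero _ (pow_ne_zero _ hg₀0)) := by
            rw [pmul_mul]
            exact pmul_eq_of p _ _ _ _ (by rw [← pow_mul, ← pow_add, ← pow_mul]; ring_nf)
  have hconjτ : ∀ b, (hb : b ≠ 0) → b ^ d = 1 →
      τ * pmul p b hb * τ⁻¹ = pmul p (b^n₀) (pow_ne_zero _ hb) := by
    intro b hb hbd
    obtain ⟨k, rfl⟩ := hg₀gen b hb hbd
    exact hconj_pow k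
  -- τ on roots
  have hτR : ∀ b, (hb : b ≠ 0) → b ^ d = 1 →
      τ (OnePoint.some b) = OnePoint.some (b^n₀ * t) := by
    intro b hb hbd
    have h1 := congrArg (fun f : Perm (OnePoint (ZMod p)) => f (OnePoint.some t))
      (hconjτ b hb hbd)
    simp only [Equiv.Perm.mul_apply] at h1
    have h2 : τ⁻¹ (OnePoint.some t) = OnePoint.some 1 := by
      have h3 := (Equiv.symm_apply_apply τ (OnePoint.some (1:ZMod p)) : τ⁻¹ (τ (OnePoint.some (1:ZMod p))) = OnePoint.some (1:ZMod p))
      rwa [hτ1] at h3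
    rw [h2, pmul_some, mul_one, pmul_some] at h1
    exact h1
  -- τ² = pmul s
  have hτ2mem : τ * τ ∈ Hsub := by
    rw [hmemH]
    refine ⟨G.mul_mem hτG hτG, ?_, ?_⟩
    · rw [Equiv.Perm.mul_apply, hτinf, hτ0]
    · rw [Equiv.Perm.mul_apply, hτ0, hτinf]
  obtain ⟨s, hs0, hsd, hsform⟩ := hHform _ hτ2mem
  -- n₀² ≡ 1 mod d
  have hg₀sq : g₀ ^ (n₀ * n₀) = g₀ := by
    have c2 := hconjτ (g₀^n₀) (pow_ne_zero _ hg₀0) (hg₀powd n₀)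
    have c3 : (τ*τ) * pmul p g₀ hg₀0 * (τ*τ)⁻¹
        = pmul p ((g₀^n₀)^n₀) (pow_ne_zero _ (pow_ne_zero _ hg₀0)) := by
      calc (τ*τ) * pmul p g₀ hg₀0 * (τ*τ)⁻¹
          = τ * (τ * pmul p g₀ hg₀0 * τ⁻¹) * τ⁻¹ := by group
        _ = τ * pmul p (g₀^n₀) (pow_ne_zero _ hg₀0) * τ⁻¹ := by rw [hconjg₀]
        _ = pmul p ((g₀^n₀)^n₀) (pow_ne_zero _ (pow_ne_zero _ hg₀0)) := c2
    rw [hsform] at c3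
    have c4 : pmul p s hs0 * pmul p g₀ hg₀0 * (pmul p s hs0)⁻¹ = pmul p g₀ hg₀0 := by
      rw [pmul_inv, pmul_mul, pmul_mul]
      exact pmul_eq_of p _ _ _ _ (by
        rw [mul_comm s g₀, mul_assoc, mul_inv_cancel₀ hs0, mul_one])
    rw [c4] at c3
    have c5 := pmul_inj p _ _ _ _ c3
    rw [← pow_mul] at c5
    exact c5.symm
  have hmodn₀ : n₀ * n₀ ≡ 1 [MOD d] := by
    have h1 : g₀ ^ (n₀ * n₀) = g₀ ^ 1 := by rw [pow_one]; exact hg₀sq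
    exact pow_mod_inj p d hd0 g₀ hg₀0 hordg₀ hg₀d h1
  -- s^{n₀} = s
  have hsn₀ : s ^ n₀ = s := by
    have c1 := hconjτ s hs0 hsd
    rw [← hsform] at c1
    have c2 : τ * (τ * τ) * τ⁻¹ = τ * τ := by group
    rw [c2, hsform] at c1
    exact (pmul_inj p _ _ _ _ c1).symm
  -- positive representative ν of n₀ mod d
  set ν : ℕ := n₀ % d + d with hνdef
  have hνmod : ν % d = n₀ % d := by
    rw [hνdef, Nat.add_mod_right]
    exact Nat.mod_mod_of_dvd n₀ dvd_rfl
  have hνModEq : ν ≡ n₀ [MOD d] := hνmod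
  have hν1 : 1 ≤ ν := by omega
  have hroot_nu : ∀ b : ZMod p, b ^ d = 1 → b ^ ν = b ^ n₀ := by
    intro b hb
    rw [root_pow_mod p b d hb ν, root_pow_mod p b d hb n₀, hνmod]
  have hmodν : ν * ν ≡ 1 [MOD d] := (hνModEq.mul hνModEq).trans hmodn₀
  have hconjν : ∀ b, (hb : b ≠ 0) → b ^ d = 1 →
      τ * pmul p b hb * τ⁻¹ = pmul p (b^ν) (pow_ne_zero _ hb) := by
    intro b hb hbd
    rw [hconjτ b hb hbd]
    exact pmul_eq_of p _ _ _ _ (hroot_nu b hbd).symm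
  have hτRν : ∀ b, (hb : b ≠ 0) → b ^ d = 1 →
      τ (OnePoint.some b) = OnePoint.some (b^ν * t) := by
    intro b hb hbd
    rw [hτR b hb hbd, hroot_nu b hbd]
  -- a convenient root-power principle
  have hg₀eq : ∀ A B : ℕ, A ≡ B [MOD d] → g₀ ^ A = g₀ ^ B := by
    intro A B hAB
    rw [root_pow_mod p g₀ d hg₀d A, root_pow_mod p g₀ d hg₀d B, hAB]
  -- σ : s = g₀^σ
  obtain ⟨σ, hσ⟩ := hg₀gen s hs0 hsd
  have hsν : s ^ ν = s := by rw [hroot_nu s hsd]; exact hsn₀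
  have hσdvd : (d:ℤ) ∣ (σ:ℤ) * ((ν:ℤ) - 1) := by
    have h1 : g₀ ^ (σ * ν) = g₀ ^ (σ * 1) := by
      rw [mul_one, ← hσ]
      rw [show g₀ ^ (σ * ν) = (g₀^σ)^ν by rw [pow_mul]]
      rw [← hσ]
      exact hsν
    have h2 := pow_mod_inj p d hd0 g₀ hg₀0 hordg₀ hg₀d h1
    have h3 := (Nat.modEq_iff_dvd).mp h2
    have h4 : ((σ:ℤ) * 1 - (σ:ℤ) * ν) = -((σ:ℤ) * ((ν:ℤ) - 1)) := by ring
    rw [show ((σ * 1 : ℕ):ℤ) = (σ:ℤ) * 1 by push_cast; ring,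
        show ((σ * ν : ℕ):ℤ) = (σ:ℤ) * ν by push_cast; ring] at h3
    rw [h4] at h3
    exact (dvd_neg).mp h3
  -- m₀ : solve m₀^{ν+1} s = 1
  obtain ⟨k, hk⟩ := solve_lin_nat d (ν+1) σ ((ν:ℤ) - 1) hd0 hd_odd
    (Or.inl (by push_cast; ring)) hσdvd
  set m₀ : ZMod p := g₀ ^ k with hm₀def
  have hm₀0 : m₀ ≠ 0 := pow_ne_zero _ hg₀0
  have hm₀d : m₀ ^ d = 1 := hg₀powd k
  have hm₀inv : m₀ ^ (ν+1) * s = 1 := by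
    rw [hm₀def, ← pow_mul, hσ, ← pow_add]
    rw [show g₀ ^ (k * (ν+1) + σ) = g₀ ^ 0 from hg₀eq _ 0 ((Nat.modEq_zero_iff_dvd).mpr hk)]
    exact pow_zero g₀
  -- the generic involution construction
  have hlam : ∀ m : ZMod p, (hm : m ≠ 0) → m ^ d = 1 → m ^ (ν+1) * s = 1 →
      (pmul p m hm * τ ∈ G) ∧
      (pmul p m hm * τ) * (pmul p m hm * τ) = 1 ∧
      (pmul p m hm * τ) (OnePoint.some (0:ZMod p)) = OnePoint.infty ∧
      (pmul p m hm * τ) OnePoint.infty = OnePoint.some (0:ZMod p) ∧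
      (∀ b, b ≠ 0 → b ^ d = 1 →
        (pmul p m hm * τ) (OnePoint.some b) = OnePoint.some (m * t * b ^ ν)) := by
    intro m hm hmd hminv
    refine ⟨G.mul_mem (hpmulG m hm hmd) hτG, ?_, ?_, ?_, ?_⟩
    · have h1 : (pmul p m hm * τ) * (pmul p m hm * τ)
          = pmul p m hm * (τ * pmul p m hm * τ⁻¹) * (τ * τ) := by group
      rw [h1, hconjν m hm hmd, hsform, pmul_mul, pmul_mul]
      rw [show pmul p (m * m^ν * s) (mul_ne_zero (mul_ne_zero hm (pow_ne_zero _ hm)) hs0)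
          = pmul p 1 one_ne_zero from pmul_eq_of p _ _ _ _ (by
        rw [show m * m^ν = m^(ν+1) from (pow_succ' m ν).symm]
        exact hminv)]
      exact pmul_one' p
    · rw [Equiv.Perm.mul_apply, hτ0, pmul_infty]
    · rw [Equiv.Perm.mul_apply, hτinf, pmul_some, mul_zero]
    · intro b hb hbd
      rw [Equiv.Perm.mul_apply, hτRν b hb hbd, pmul_some]
      congr 1
      ring
  obtain ⟨hlam0G, hlam0inv, hlam00, hlam0inf, hlam0R⟩ := hlam m₀ hm₀0 hm₀d hm₀inv
  set lam0 : Perm (OnePoint (ZMod p)) := pmul p m₀ hm₀0 * τ with hlam0def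
  set c₀ : ZMod p := m₀ * t with hc₀def
  have hc₀0 : c₀ ≠ 0 := mul_ne_zero hm₀0 ht0
  have hlam0ne1 : lam0 ≠ 1 := by
    intro h
    have h1 : lam0 (OnePoint.some (0:ZMod p)) = OnePoint.some (0:ZMod p) := by
      rw [h]; rfl
    rw [hlam00] at h1
    exact Option.some_ne_none _ h1.symm
  have hpd2 : p / 2 = d := by omega
  -- c₀ is a nonsquare
  have hc₀d : c₀ ^ d = -1 := by
    have halt : c₀ ^ d = 1 ∨ c₀ ^ d = -1 := by
      have h0 := ZMod.pow_div_two_eq_neg_one_or_one p hc₀0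
      rwa [hpd2] at h0
    rcases halt with hroot | hns
    · exfalso
      have hc1 : lam0 (OnePoint.some (1:ZMod p)) = OnePoint.some c₀ := by
        rw [show lam0 (OnePoint.some (1:ZMod p)) = OnePoint.some (m₀ * t * 1 ^ ν) from
          hlam0R 1 one_ne_zero (one_pow d), one_pow, mul_one]
      have hc₀ν1 : c₀ ^ (ν + 1) = 1 := by
        have h1 := congrArg (fun f : Perm (OnePoint (ZMod p)) =>
          f (OnePoint.some (1:ZMod p))) hlam0inv
        simp only [Equiv.Perm.mul_apply, Equiv.Perm.one_apply] at h1
        rw [hc1, hlam0R c₀ hc₀0 hroot] at h1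
        have h2 : m₀ * t * c₀ ^ ν = 1 := Option.some_injective _ h1
        rw [← pow_succ'] at h2
        exact h2
      obtain ⟨γ, hγ⟩ := hg₀gen c₀ hc₀0 hroot
      have hγdvd : (d:ℤ) ∣ (γ:ℤ) * ((ν:ℤ) + 1) := by
        have h1 : g₀ ^ (γ * (ν+1)) = g₀ ^ 0 := by
          rw [pow_mul, ← hγ, hc₀ν1, pow_zero]
        have h2 := pow_mod_inj p d hd0 g₀ hg₀0 hordg₀ hg₀d h1
        have h3 : d ∣ γ * (ν+1) := (Nat.modEq_zero_iff_dvd).mp h2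
        have h4 := Int.natCast_dvd_natCast.mpr h3
        push_cast at h4
        exact h4
      obtain ⟨i, hi⟩ := solve_lin_nat d (ν-1) γ ((ν:ℤ) + 1) hd0 hd_odd
        (Or.inr (by push_cast [Nat.cast_sub hν1]; ring)) hγdvd
      set z : ZMod p := g₀ ^ i with hzdef
      have hz0 : z ≠ 0 := pow_ne_zero _ hg₀0
      have hzd : z ^ d = 1 := hg₀powd i
      have hmodfix : (γ + i * ν) ≡ i [MOD d] := by
        rw [Nat.modEq_iff_dvd]
        have h5 := Int.natCast_dvd_natCast.mpr hi
        push_cast [Nat.cast_sub hν1] at h5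
        have h6 : ((i:ℤ)) - ((γ:ℤ) + i * ν) = -((i:ℤ) * ((ν:ℤ) - 1) + γ) := by ring
        push_cast
        rw [h6]
        exact dvd_neg.mpr h5
      have hfix : lam0 (OnePoint.some z) = OnePoint.some z := by
        rw [hlam0R z hz0 hzd]
        congr 1
        rw [hγ, hzdef, ← pow_mul, ← pow_add]
        exact hg₀eq _ _ hmodfix
      exact hnofix lam0 hlam0G hlam0inv hlam0ne1 (OnePoint.some z) hfix
    · exact hns
  -- choice of odd n
  have hm1ne0 : (-1 : ZMod p) ≠ 0 := by
    intro hh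
    have : (1 : ZMod p) = 0 := by linear_combination -hh
    simpa using this
  obtain ⟨n, hnodd2, hncase⟩ : ∃ n : ℕ, n % 2 = 1 ∧ (n = ν ∨ n = ν + d) := by
    rcases Nat.even_or_odd ν with hev | hod
    · have hev2 : ν % 2 = 0 := Nat.even_iff.mp hev
      exact ⟨ν + d, by omega, Or.inr rfl⟩
    · exact ⟨ν, Nat.odd_iff.mp hod, Or.inl rfl⟩
  have hn1 : 1 ≤ n := by rcases hncase with h|h <;> omega
  have hnModν : n ≡ ν [MOD d] := by
    rcases hncase with h|h
    · rw [h]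
    · rw [h]; exact Nat.add_mod_right ν d
  have hmodn : n * n ≡ 1 [MOD d] := (hnModν.mul hnModν).trans hmodν
  have hnn1 : 1 ≤ n * n := Nat.one_le_iff_ne_zero.mpr (by positivity)
  have hdvd_nsq' : d ∣ n * n - 1 := (Nat.modEq_iff_dvd' hnn1).mp hmodn.symm
  have hdvd_nsq : d ∣ n ^ 2 - 1 := by rw [pow_two]; exact hdvd_nsq'
  have hfact : (n-1)*(n+1) = n*n - 1 := by
    obtain ⟨n', rfl⟩ : ∃ n', n = n'+1 := ⟨n-1, by omega⟩
    have h1 : (n'+1)*(n'+1) = n'*(n'+1+1) + 1 := by ring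
    simp only [Nat.add_sub_cancel]
    omega
  have h2dvd : 2*d ∣ (n-1)*(n+1) := by
    apply Nat.Coprime.mul_dvd_of_dvd_of_dvd
    · exact Nat.prime_two.coprime_iff_not_dvd.mpr (by omega)
    · rw [hfact]
      have hmm2 : n*n % 2 = 1 := by rw [Nat.mul_mod, hnodd2]
      omega
    · rw [hfact]; exact hdvd_nsq'
  have hc₀2d : c₀ ^ (2*d) = 1 := by
    rw [mul_comm, pow_mul, hc₀d, neg_one_sq]
  have hxdvd : 2*d ∣ (n-1)*(ν+1) := by
    rcases hncase with h|h
    · have h2 := h2dvd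
      rw [h] at h2 ⊢
      exact h2
    · have e0 : n + 1 = (ν+1) + d := by omega
      have e1 : (n-1)*(n+1) = (n-1)*(ν+1) + (n-1)*d := by rw [e0, Nat.mul_add]
      have e2 : 2*d ∣ (n-1)*d := by
        obtain ⟨q, hq⟩ : 2 ∣ n - 1 := by omega
        exact ⟨q, by rw [hq]; ring⟩
      have e3 := Nat.dvd_sub h2dvd e2
      rw [e1, Nat.add_sub_cancel] at e3
      exact e3
  -- x and its square root u inside the ν+1-kernel
  set x : ZMod p := c₀ ^ (n-1) with hxdef
  have hx0 : x ≠ 0 := pow_ne_zero _ hc₀0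
  have hxd : x ^ d = 1 := by
    rw [hxdef, ← pow_mul, mul_comm, pow_mul, hc₀d]
    exact Even.neg_one_pow (Nat.even_iff.mpr (by omega))
  have hxν : x ^ (ν+1) = 1 := by
    rw [hxdef, ← pow_mul]
    rw [root_pow_mod p c₀ (2*d) hc₀2d ((n-1)*(ν+1))]
    have e : ((n-1)*(ν+1)) % (2*d) = 0 := by
      have h9 := (Nat.modEq_zero_iff_dvd).mpr hxdvd
      simpa [Nat.ModEq] using h9
    rw [e, pow_zero]
  obtain ⟨ξ, hξ⟩ := hg₀gen x hx0 hxd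
  have hξdvd : d ∣ ξ * (ν+1) := by
    have h1 : g₀ ^ (ξ*(ν+1)) = g₀ ^ 0 := by rw [pow_mul, ← hξ, hxν, pow_zero]
    exact (Nat.modEq_zero_iff_dvd).mp (pow_mod_inj p d hd0 g₀ hg₀0 hordg₀ hg₀d h1)
  set ι : ℕ := ξ * ((d+1)/2) with hιdef
  set u : ZMod p := g₀ ^ ι with hudef
  have hu0 : u ≠ 0 := pow_ne_zero _ hg₀0
  have hud : u ^ d = 1 := hg₀powd ι
  have h2ι : 2 * ι ≡ ξ [MOD d] := by
    have hdiv : (d+1)/2*2 = d+1 := by omega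
    have e1 : 2 * ι = ξ * (d+1) := by
      calc 2 * ι = ξ * ((d+1)/2 * 2) := by rw [hιdef]; ring
        _ = ξ * (d+1) := by rw [hdiv]
    rw [e1]
    have e2 : (d+1) ≡ 1 [MOD d] := by
      show (d+1) % d = 1 % d
      rw [Nat.add_comm]
      exact Nat.add_mod_right 1 d
    simpa using Nat.ModEq.mul_left ξ e2
  have huu : u * u = x := by
    rw [hudef, ← pow_add, hξ]
    refine hg₀eq _ _ ?_
    have e : ι + ι = 2*ι := by ring
    rw [e]
    exact h2ι
  have huν : u ^ (ν+1) = 1 := by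
    rw [hudef, ← pow_mul]
    have e : ι * (ν+1) = ((d+1)/2) * (ξ*(ν+1)) := by rw [hιdef]; ring
    rw [e]
    rw [show g₀ ^ (((d+1)/2) * (ξ*(ν+1))) = g₀ ^ 0 from hg₀eq _ 0
      ((Nat.modEq_zero_iff_dvd).mpr (Dvd.dvd.mul_left hξdvd _))]
    exact pow_zero g₀
  have hun : u ^ (n+1) = 1 := by
    have h1 : (n+1) ≡ (ν+1) [MOD d] := hnModν.add_right 1
    rw [root_pow_mod p u d hud (n+1), h1, ← root_pow_mod p u d hud (ν+1)]
    exact huν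
  -- the final involution
  set m₁ : ZMod p := u * m₀ with hm₁def
  have hm₁0 : m₁ ≠ 0 := mul_ne_zero hu0 hm₀0
  have hm₁d : m₁ ^ d = 1 := by rw [hm₁def, mul_pow, hud, hm₀d, one_mul]
  have hm₁inv : m₁ ^ (ν+1) * s = 1 := by
    rw [hm₁def, mul_pow, huν, one_mul]
    exact hm₀inv
  obtain ⟨hlamG, hlaminv, hlam0, hlaminf, hlamR⟩ := hlam m₁ hm₁0 hm₁d hm₁inv
  set lam : Perm (OnePoint (ZMod p)) := pmul p m₁ hm₁0 * τ with hlamdef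
  set c : ZMod p := m₁ * t with hcdef
  have hc_eq : c = u * c₀ := by rw [hcdef, hm₁def, hc₀def]; ring
  have hc0 : c ≠ 0 := mul_ne_zero hm₁0 ht0
  have hcd : c ^ d = -1 := by rw [hc_eq, mul_pow, hud, hc₀d, one_mul]
  have hcn1 : c ^ (n-1) = 1 := by
    rw [hc_eq, mul_pow, ← hxdef, ← huu]
    rw [show u^(n-1) * (u*u) = u^((n-1)+1+1) by rw [pow_succ, pow_succ]; ring,
      show (n-1)+1+1 = n+1 from by omega]
    exact hun
  have hcn : c ^ n = c := by
    have e : c ^ n = c ^ (n-1) * c := by rw [← pow_succ, show n-1+1 = n from by omega]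
    rw [e, hcn1, one_mul]
  have hlamne1 : lam ≠ 1 := by
    intro h
    have h1 : lam (OnePoint.some (0:ZMod p)) = OnePoint.some (0:ZMod p) := by rw [h]; rfl
    rw [hlam0] at h1
    exact Option.some_ne_none _ h1.symm
  haveI : Fact (Nat.Prime 2) := ⟨Nat.prime_two⟩
  have hord2 : orderOf lam = 2 := by
    apply orderOf_eq_prime
    · rw [pow_two]; exact hlaminv
    · exact hlamne1
  have hconjlam : ∀ w : ZMod p, (hw : w ≠ 0) → w ^ d = 1 →
      lam * pmul p w hw * lam⁻¹ = pmul p (w^ν) (pow_ne_zero _ hw) := by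
    intro w hw hwd
    rw [hlamdef]
    have h1 : (pmul p m₁ hm₁0 * τ) * pmul p w hw * (pmul p m₁ hm₁0 * τ)⁻¹
        = pmul p m₁ hm₁0 * (τ * pmul p w hw * τ⁻¹) * (pmul p m₁ hm₁0)⁻¹ := by group
    rw [h1, hconjν w hw hwd, pmul_inv, pmul_mul, pmul_mul]
    exact pmul_eq_of p _ _ _ _ (by
      rw [mul_comm m₁ (w^ν), mul_assoc, mul_inv_cancel₀ hm₁0, mul_one])
  have hlam1 : lam (OnePoint.some (1:ZMod p)) = OnePoint.some c := by
    rw [show lam (OnePoint.some (1:ZMod p)) = OnePoint.some (m₁ * t * 1 ^ ν) from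
      hlamR 1 one_ne_zero (one_pow d), one_pow, mul_one]
  have hlamc : lam (OnePoint.some c) = OnePoint.some (1:ZMod p) := by
    have h1 := congrArg (fun f : Perm (OnePoint (ZMod p)) =>
      f (OnePoint.some (1:ZMod p))) hlaminv
    simp only [Equiv.Perm.mul_apply, Equiv.Perm.one_apply] at h1
    rw [hlam1] at h1
    exact h1
  refine ⟨n, lam, c, Nat.odd_iff.mpr hnodd2, hdvd_nsq, hlamG, hlam0, hlaminf, hord2, ?_, ?_, ?_, hcn⟩
  · rw [mem_Nset_iff p hp2]; exact hcd
  · intro z hz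
    rw [mem_Rset_iff p hp2] at hz
    obtain ⟨hz0, hzd⟩ := hz
    rw [hlamR z hz0 hzd]
    congr 1
    rw [root_pow_mod p z d hzd ν, root_pow_mod p z d hzd n, hnModν]
  · intro z hz
    rw [mem_Nset_iff p hp2] at hz
    have hz0 : z ≠ 0 := by
      intro h
      rw [h, zero_pow (by omega : d ≠ 0)] at hz
      exact hm1ne0 hz.symm
    set w : ZMod p := c⁻¹ * z with hwdef
    have hw0 : w ≠ 0 := mul_ne_zero (inv_ne_zero hc0) hz0
    have hwd : w ^ d = 1 := by
      rw [hwdef, mul_pow, inv_pow, hcd, hz]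
      rw [show ((-1 : ZMod p))⁻¹ = -1 from by
        rw [inv_eq_of_mul_eq_one_right (by ring : (-1 : ZMod p) * (-1) = 1)]]
      ring
    have h4 : lam * pmul p w hw0 = pmul p (w^ν) (pow_ne_zero _ hw0) * lam := by
      have h5 := hconjlam w hw0 hwd
      calc lam * pmul p w hw0 = (lam * pmul p w hw0 * lam⁻¹) * lam := by group
        _ = pmul p (w^ν) (pow_ne_zero _ hw0) * lam := by rw [h5]
    have h5 := congrArg (fun f : Perm (OnePoint (ZMod p)) => f (OnePoint.some c)) h4
    simp only [Equiv.Perm.mul_apply] at h5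
    rw [hlamc, pmul_some, pmul_some, mul_one] at h5
    have h6 : w * c = z := by
      rw [hwdef]
      field_simp
    rw [h6] at h5
    rw [h5]
    congr 1
    rw [root_pow_mod p w d hwd ν, ← hnModν, ← root_pow_mod p w d hwd n]
    rw [hwdef, mul_pow, inv_pow, hcn]
end

section
/- Assume p ≡ 3 (mod 4). Suppose λ ∈ K̄ has order 2, n is an odd natural number, and c ∈ N satisfy λ(z) = c·zⁿ for z ∈ R, λ(z) = c⁻¹·zⁿ for z ∈ N, and cⁿ = c. Let α be the permutation of ℤ/p ∪ {∞} obtained as the composite (translation by 1) ∘ (map z ↦ (−c⁻¹)·z) ∘ λ, i.e. α(z) = 1 − c⁻¹·λ(z) on ℤ/p ∪ {∞}. Then α ∈ G, α has order 3, and α⁻¹(z) = λ(c·(1 − z)) for all z. -/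
instance (X : Type*) [Fintype X] : Fintype (OnePoint X) :=
  inferInstanceAs (Fintype (Option X))

namespace AlphaAux

set_option linter.unusedSectionVars false

variable {p : ℕ} [Fact p.Prime]

lemma ptrans_some (a z : ZMod p) : ptrans p a (OnePoint.some z) = OnePoint.some (z + a) := rfl

lemma ptrans_infty (a : ZMod p) : ptrans p a OnePoint.infty = OnePoint.infty := rfl

lemma pmul_some (a : ZMod p) (ha : a ≠ 0) (z : ZMod p) :
    pmul p a ha (OnePoint.some z) = OnePoint.some (a * z) := rfl

lemma pmul_infty (a : ZMod p) (ha : a ≠ 0) :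
    pmul p a ha OnePoint.infty = OnePoint.infty := rfl

lemma onePoint_cases (x : OnePoint (ZMod p)) : x = OnePoint.infty ∨ ∃ z, x = OnePoint.some z := by
  cases x with
  | infty => exact Or.inl rfl
  | coe z => exact Or.inr ⟨z, rfl⟩

lemma some_injective : Function.Injective (OnePoint.some : ZMod p → OnePoint (ZMod p)) :=
  Option.some_injective _

lemma some_ne_infty (z : ZMod p) : OnePoint.some z ≠ OnePoint.infty := by
  exact Option.some_ne_none z

lemma ptrans_mul (a b : ZMod p) : ptrans p a * ptrans p b = ptrans p (b + a) := by
  ext x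
  rcases onePoint_cases x with h | ⟨z, h⟩ <;> subst h <;>
    simp [Equiv.Perm.mul_apply, ptrans_some, ptrans_infty, add_assoc]

lemma ptrans_zero : ptrans p 0 = 1 := by
  ext x
  rcases onePoint_cases x with h | ⟨z, h⟩ <;> subst h <;>
    simp [ptrans_some, ptrans_infty]

lemma ptrans_inv (a : ZMod p) : (ptrans p a)⁻¹ = ptrans p (-a) := by
  apply inv_eq_of_mul_eq_one_right
  rw [ptrans_mul, neg_add_cancel, ptrans_zero]

lemma pmul_mul (a b : ZMod p) (ha : a ≠ 0) (hb : b ≠ 0) :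
    pmul p a ha * pmul p b hb = pmul p (a * b) (mul_ne_zero ha hb) := by
  ext x
  rcases onePoint_cases x with h | ⟨z, h⟩ <;> subst h <;>
    simp [Equiv.Perm.mul_apply, pmul_some, pmul_infty, mul_assoc]

lemma pmul_one : pmul p 1 one_ne_zero = 1 := by
  ext x
  rcases onePoint_cases x with h | ⟨z, h⟩ <;> subst h <;>
    simp [pmul_some, pmul_infty]

lemma pmul_congr (a b : ZMod p) (ha : a ≠ 0) (hb : b ≠ 0) (h : a = b) :
    pmul p a ha = pmul p b hb := by subst h; rfl

lemma pmul_inv (a : ZMod p) (ha : a ≠ 0) :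
    (pmul p a ha)⁻¹ = pmul p a⁻¹ (inv_ne_zero ha) := by
  apply inv_eq_of_mul_eq_one_right
  rw [pmul_mul, pmul_congr (a * a⁻¹) 1 _ one_ne_zero (mul_inv_cancel₀ ha), pmul_one]

/-- The translation homomorphism. -/
def transHom : Multiplicative (ZMod p) →* Equiv.Perm (OnePoint (ZMod p)) :=
  MonoidHom.mk' (fun a => ptrans p (Multiplicative.toAdd a))
    (by
      intro a b
      rw [ptrans_mul]
      show ptrans p (Multiplicative.toAdd a + Multiplicative.toAdd b) = _
      rw [add_comm])

lemma transHom_injective : Function.Injective (transHom (p := p)) := by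
  intro a b h
  have := congrArg (fun (e : Equiv.Perm (OnePoint (ZMod p))) => e (OnePoint.some 0)) h
  simp only [transHom, MonoidHom.mk'_apply, ptrans_some] at this
  exact Multiplicative.toAdd.injective (by simpa using some_injective this)

lemma orderOf_ptrans_one : orderOf (ptrans p (1 : ZMod p)) = p := by
  have h1 : ptrans p (1 : ZMod p) = transHom (Multiplicative.ofAdd (1 : ZMod p)) := rfl
  rw [h1, orderOf_injective _ transHom_injective, orderOf_ofAdd_eq_addOrderOf,
    ZMod.addOrderOf_one]

lemma ptrans_zpow (k : ℤ) : (ptrans p (1 : ZMod p)) ^ k = ptrans p (k : ZMod p) := by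
  have h1 : ptrans p (1 : ZMod p) = transHom (Multiplicative.ofAdd (1 : ZMod p)) := rfl
  rw [h1, ← map_zpow, ← ofAdd_zsmul, zsmul_eq_mul, mul_one]
  rfl

open MulAction in
lemma stab_affine (hp2 : p ≠ 2)
    (G : Subgroup (Equiv.Perm (OnePoint (ZMod p))))
    (htrans : ∀ x y : OnePoint (ZMod p), ∃ g ∈ G, g x = y)
    (hcard : Nat.card G = (p ^ 3 - p) / 2)
    (htransl : ∀ a : ZMod p, ptrans p a ∈ G)
    {g : Equiv.Perm (OnePoint (ZMod p))} (hg : g ∈ G)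
    (hginf : g OnePoint.infty = OnePoint.infty) :
    ∃ b d : ZMod p, b ≠ 0 ∧ ∀ z : ZMod p, g (OnePoint.some z) = OnePoint.some (b * z + d) := by
  have hp : p.Prime := Fact.out
  have hp3 : 3 ≤ p := by
    have := hp.two_le
    omega
  obtain ⟨pk, hpk⟩ := hp.odd_of_ne_two hp2
  set q : ℕ := (p - 1) / 2 with hqdef
  have hq : 2 * q = p - 1 := by omega
  have hq_pos : 0 < q := by omega
  have hqltp : q < p := by omega
  -- cardinality of G
  have hcardG : Nat.card ↥G = (p + 1) * (p * q) := by
    rw [hcard]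
    have key : p ^ 3 = 2 * ((p + 1) * (p * q)) + p := by
      have h2 : 2 * ((p + 1) * (p * q)) = (p + 1) * (p * (2 * q)) := by ring
      rw [h2, hq]
      obtain ⟨m, rfl⟩ : ∃ m, p = m + 1 := ⟨p - 1, by omega⟩
      simp only [Nat.add_sub_cancel]
      ring
    rw [key, Nat.add_sub_cancel, Nat.mul_div_cancel_left _ two_pos]
  -- stabilizer of ∞
  set K := stabilizer ↥G (OnePoint.infty : OnePoint (ZMod p)) with hKdef
  have horb : orbit ↥G (OnePoint.infty : OnePoint (ZMod p)) = Set.univ := by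
    apply Set.eq_univ_of_forall
    intro y
    obtain ⟨g', hg', hgy⟩ := htrans OnePoint.infty y
    exact ⟨⟨g', hg'⟩, hgy⟩
  have hcardX : Nat.card (OnePoint (ZMod p)) = p + 1 := by
    have : Nat.card (OnePoint (ZMod p)) = Nat.card (Option (ZMod p)) := rfl
    rw [this, Nat.card_eq_fintype_card, Fintype.card_option, ZMod.card]
  have hcardK : Nat.card K = p * q := by
    have h1 := Subgroup.card_eq_card_quotient_mul_card_subgroup K
    have h2 : Nat.card (↥G ⧸ K) = p + 1 := by
      rw [← Nat.card_congr (orbitEquivQuotientStabilizer ↥G (OnePoint.infty : OnePoint (ZMod p))),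
        horb, Nat.card_congr (Equiv.Set.univ _), hcardX]
    rw [h2, hcardG] at h1
    exact (Nat.eq_of_mul_eq_mul_left (by omega) h1).symm
  -- the element g as an element of K
  have hgK : (⟨g, hg⟩ : ↥G) ∈ K := hginf
  set gK : ↥K := ⟨⟨g, hg⟩, hgK⟩ with hgKdef
  -- the translation t1 in K
  have ht1K : (⟨ptrans p 1, htransl 1⟩ : ↥G) ∈ K := rfl
  set t1 : ↥K := ⟨⟨ptrans p 1, htransl 1⟩, ht1K⟩ with ht1def
  have hord : orderOf t1 = p := by
    have h1 := orderOf_injective K.subtype K.subtype_injective t1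
    have h2 := orderOf_injective G.subtype G.subtype_injective (K.subtype t1)
    rw [← h1, ← h2]
    exact orderOf_ptrans_one
  -- Sylow theory
  have hpg : IsPGroup p (Subgroup.zpowers t1) :=
    IsPGroup.of_card (n := 1) (by rw [Nat.card_zpowers, hord, pow_one])
  obtain ⟨P₀, hP₀⟩ := hpg.exists_le_sylow
  have hndvd : ¬ p ∣ q := fun h => absurd (Nat.le_of_dvd hq_pos h) (by omega)
  have hfact : (Nat.card ↥K).factorization p = 1 := by
    rw [hcardK, Nat.factorization_mul (by omega) (by omega)]
    simp only [Finsupp.coe_add, Pi.add_apply]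
    rw [Nat.Prime.factorization_self hp, Nat.factorization_eq_zero_of_not_dvd hndvd]
  have hcardP₀ : Nat.card P₀ = p := by
    rw [P₀.card_eq_multiplicity, hfact, pow_one]
  have hzp : Subgroup.zpowers t1 = (P₀ : Subgroup ↥K) := by
    apply Subgroup.eq_of_le_of_card_ge hP₀
    rw [Nat.card_zpowers, hord, hcardP₀]
  have hsub : Subsingleton (Sylow p ↥K) := by
    have hmod := card_sylow_modEq_one p ↥K
    have hdvd := Sylow.card_dvd_index P₀
    have hidx : (P₀ : Subgroup ↥K).index = q := by
      have h3 := Subgroup.card_mul_index (P₀ : Subgroup ↥K)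
      rw [hcardP₀, hcardK] at h3
      exact Nat.eq_of_mul_eq_mul_left (by omega) h3
    rw [hidx] at hdvd
    have hle : Nat.card (Sylow p ↥K) ≤ q := Nat.le_of_dvd hq_pos hdvd
    have hpos : 0 < Nat.card (Sylow p ↥K) := Nat.card_pos
    have h1' : Nat.card (Sylow p ↥K) % p = Nat.card (Sylow p ↥K) :=
      Nat.mod_eq_of_lt (lt_of_le_of_lt hle hqltp)
    have h2' : 1 % p = 1 := Nat.mod_eq_of_lt (by omega)
    unfold Nat.ModEq at hmod
    have : Nat.card (Sylow p ↥K) = 1 := by omega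
    exact Nat.card_eq_one_iff_unique.mp this |>.1
  have hnormal : (P₀ : Subgroup ↥K).Normal := by
    apply Subgroup.normalizer_eq_top_iff.mp
    apply top_unique
    intro x _
    exact Sylow.smul_eq_iff_mem_normalizer.mp (Subsingleton.elim _ _)
  -- conjugation
  have hconj : gK * t1 * gK⁻¹ ∈ (P₀ : Subgroup ↥K) :=
    hnormal.conj_mem t1 (hzp ▸ Subgroup.mem_zpowers t1) gK
  have hconj' : gK * t1 * gK⁻¹ ∈ Subgroup.zpowers t1 := by rw [hzp]; exact hconj
  obtain ⟨kk, hkk⟩ := Subgroup.mem_zpowers_iff.mp hconj'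
  set b : ZMod p := ((kk : ℤ) : ZMod p) with hbdef
  have hgt : g * ptrans p 1 * g⁻¹ = ptrans p b := by
    have h6 := congrArg (fun x : ↥K => ((x : ↥G) : Equiv.Perm (OnePoint (ZMod p)))) hkk
    have h7 : (((t1 ^ kk : ↥K) : ↥G) : Equiv.Perm (OnePoint (ZMod p))) = ptrans p 1 ^ kk := by
      push_cast
      rfl
    rw [h7, ptrans_zpow] at h6
    exact h6.symm
  have hmul : g * ptrans p 1 = ptrans p b * g := mul_inv_eq_iff_eq_mul.mp hgt
  -- the value at 0
  obtain ⟨d, hd⟩ : ∃ d, g (OnePoint.some (0 : ZMod p)) = OnePoint.some d := by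
    rcases onePoint_cases (g (OnePoint.some (0 : ZMod p))) with h | ⟨z, h⟩
    · exact absurd (g.injective (h.trans hginf.symm)) (some_ne_infty 0)
    · exact ⟨z, h⟩
  have hstep : ∀ x : OnePoint (ZMod p), g (ptrans p 1 x) = ptrans p b (g x) := by
    intro x
    have := DFunLike.congr_fun hmul x
    simpa [Equiv.Perm.mul_apply] using this
  have hnat : ∀ m : ℕ, g (OnePoint.some ((m : ZMod p))) = OnePoint.some (b * m + d) := by
    intro m
    induction m with
    | zero => simpa using hd
    | succ m ih =>
      have h8 : (((m + 1 : ℕ)) : ZMod p) = (m : ZMod p) + 1 := by push_cast; ring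
      have h10 := hstep (OnePoint.some ((m : ZMod p)))
      rw [ptrans_some] at h10
      rw [h8, h10, ih, ptrans_some]
      congr 1
      push_cast
      ring
  haveI : NeZero p := ⟨hp.pos.ne'⟩
  have hall : ∀ z : ZMod p, g (OnePoint.some z) = OnePoint.some (b * z + d) := by
    intro z
    have := hnat z.val
    rwa [ZMod.natCast_rightInverse z] at this
  refine ⟨b, d, ?_, hall⟩
  intro hb0
  have h1' := hall 1
  have h0' := hall 0
  rw [hb0] at h1' h0'
  simp only [mul_one, mul_zero, zero_mul, zero_add] at h1' h0'
  have := g.injective (h1'.trans h0'.symm)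
  exact one_ne_zero (some_injective this)

lemma stab_mult (hp2 : p ≠ 2)
    (G : Subgroup (Equiv.Perm (OnePoint (ZMod p))))
    (htrans : ∀ x y : OnePoint (ZMod p), ∃ g ∈ G, g x = y)
    (hcard : Nat.card G = (p ^ 3 - p) / 2)
    (htransl : ∀ a : ZMod p, ptrans p a ∈ G)
    {g : Equiv.Perm (OnePoint (ZMod p))} (hg : g ∈ G)
    (hginf : g OnePoint.infty = OnePoint.infty)
    (hg0 : g (OnePoint.some (0 : ZMod p)) = OnePoint.some (0 : ZMod p)) :
    ∃ b : ZMod p, b ≠ 0 ∧ ∀ z : ZMod p, g (OnePoint.some z) = OnePoint.some (b * z) := by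
  obtain ⟨b, d, hb, hbd⟩ := stab_affine hp2 G htrans hcard htransl hg hginf
  have hd0 : d = 0 := by
    have h := hbd 0
    rw [hg0] at h
    have := some_injective h.symm
    simpa using this
  exact ⟨b, hb, fun z => by simpa [hd0] using hbd z⟩

lemma eq_one_of_fixes (hp2 : p ≠ 2)
    (G : Subgroup (Equiv.Perm (OnePoint (ZMod p))))
    (htrans : ∀ x y : OnePoint (ZMod p), ∃ g ∈ G, g x = y)
    (hcard : Nat.card G = (p ^ 3 - p) / 2)
    (htransl : ∀ a : ZMod p, ptrans p a ∈ G)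
    {g : Equiv.Perm (OnePoint (ZMod p))} (hg : g ∈ G)
    (hginf : g OnePoint.infty = OnePoint.infty)
    (hg0 : g (OnePoint.some (0 : ZMod p)) = OnePoint.some (0 : ZMod p))
    (hg1 : g (OnePoint.some (1 : ZMod p)) = OnePoint.some (1 : ZMod p)) :
    g = 1 := by
  obtain ⟨b, hb, hmul⟩ := stab_mult hp2 G htrans hcard htransl hg hginf hg0
  have hb1 : b = 1 := by
    have h := hmul 1
    rw [hg1] at h
    have := some_injective h
    simpa using this.symm
  apply Equiv.ext
  intro x
  rcases onePoint_cases x with h | ⟨z, h⟩ <;> subst h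
  · simpa using hginf
  · have := hmul z
    rw [hb1, one_mul] at this
    simpa using this

open MulAction in
lemma pmul_sq_mem (hp2 : p ≠ 2)
    (G : Subgroup (Equiv.Perm (OnePoint (ZMod p))))
    (htrans : ∀ x y : OnePoint (ZMod p), ∃ g ∈ G, g x = y)
    (hcard : Nat.card G = (p ^ 3 - p) / 2)
    (htransl : ∀ a : ZMod p, ptrans p a ∈ G)
    (s : ZMod p) (hs : s ≠ 0) :
    pmul p (s * s) (mul_ne_zero hs hs) ∈ G := by
  classical
  have hp : p.Prime := Fact.out
  have hp3 : 3 ≤ p := by have := hp.two_le; omega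
  obtain ⟨pk, hpk⟩ := hp.odd_of_ne_two hp2
  set q : ℕ := (p - 1) / 2 with hqdef
  have hq : 2 * q = p - 1 := by omega
  have hq_pos : 0 < q := by omega
  have hqltp : q < p := by omega
  -- the subgroup of units u with pmul u ∈ G
  have hval : ∀ u : (ZMod p)ˣ, (u : ZMod p) ≠ 0 := fun u => u.ne_zero
  let Hsub : Subgroup (ZMod p)ˣ :=
    { carrier := {u | pmul p (u : ZMod p) (hval u) ∈ G}
      one_mem' := by
        have h1 : pmul p ((1 : (ZMod p)ˣ) : ZMod p) (hval 1) = 1 := by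
          rw [pmul_congr _ 1 _ one_ne_zero (by simp), pmul_one]
        show pmul p ((1 : (ZMod p)ˣ) : ZMod p) (hval 1) ∈ G
        rw [h1]; exact G.one_mem
      mul_mem' := by
        intro a b ha hb
        show pmul p ((a * b : (ZMod p)ˣ) : ZMod p) (hval _) ∈ G
        rw [pmul_congr _ ((a : ZMod p) * (b : ZMod p)) _ (mul_ne_zero (hval a) (hval b))
          (Units.val_mul a b), ← pmul_mul _ _ (hval a) (hval b)]
        exact G.mul_mem ha hb
      inv_mem' := by
        intro a ha
        show pmul p ((a⁻¹ : (ZMod p)ˣ) : ZMod p) (hval _) ∈ G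
        rw [pmul_congr _ (a : ZMod p)⁻¹ _ (inv_ne_zero (hval a))
          (Units.val_inv_eq_inv_val a), ← pmul_inv _ (hval a)]
        exact G.inv_mem ha }
  have hmemHsub : ∀ u : (ZMod p)ˣ, u ∈ Hsub ↔ pmul p (u : ZMod p) (hval u) ∈ G := fun u => Iff.rfl
  -- cardinality of the stabilizer of ∞
  set K := stabilizer ↥G (OnePoint.infty : OnePoint (ZMod p)) with hKdef
  have horb : orbit ↥G (OnePoint.infty : OnePoint (ZMod p)) = Set.univ := by
    apply Set.eq_univ_of_forall
    intro y
    obtain ⟨g', hg', hgy⟩ := htrans OnePoint.infty y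
    exact ⟨⟨g', hg'⟩, hgy⟩
  have hcardX : Nat.card (OnePoint (ZMod p)) = p + 1 := by
    have : Nat.card (OnePoint (ZMod p)) = Nat.card (Option (ZMod p)) := rfl
    rw [this, Nat.card_eq_fintype_card, Fintype.card_option, ZMod.card]
  have hcardG : Nat.card ↥G = (p + 1) * (p * q) := by
    rw [hcard]
    have key : p ^ 3 = 2 * ((p + 1) * (p * q)) + p := by
      have h2 : 2 * ((p + 1) * (p * q)) = (p + 1) * (p * (2 * q)) := by ring
      rw [h2, hq]
      obtain ⟨m, rfl⟩ : ∃ m, p = m + 1 := ⟨p - 1, by omega⟩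
      simp only [Nat.add_sub_cancel]
      ring
    rw [key, Nat.add_sub_cancel, Nat.mul_div_cancel_left _ two_pos]
  have hcardK : Nat.card K = p * q := by
    have h1 := Subgroup.card_eq_card_quotient_mul_card_subgroup K
    have h2 : Nat.card (↥G ⧸ K) = p + 1 := by
      rw [← Nat.card_congr (orbitEquivQuotientStabilizer ↥G (OnePoint.infty : OnePoint (ZMod p))),
        horb, Nat.card_congr (Equiv.Set.univ _), hcardX]
    rw [h2, hcardG] at h1
    exact (Nat.eq_of_mul_eq_mul_left (by omega) h1).symm
  -- orbit of 0 under K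
  have hKfix : ∀ k : ↥K, ((k : ↥G) : Equiv.Perm (OnePoint (ZMod p))) OnePoint.infty
      = OnePoint.infty := fun k => k.2
  have horb2 : orbit ↥K (OnePoint.some (0 : ZMod p)) = Set.range OnePoint.some := by
    apply Set.Subset.antisymm
    · rintro y ⟨k, rfl⟩
      rcases onePoint_cases (((k : ↥G) : Equiv.Perm (OnePoint (ZMod p)))
          (OnePoint.some (0 : ZMod p))) with h | ⟨z, h⟩
      · exact absurd (((k : ↥G) : Equiv.Perm (OnePoint (ZMod p))).injective
          (h.trans (hKfix k).symm)) (some_ne_infty 0)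
      · exact ⟨z, h.symm⟩
    · rintro y ⟨z, rfl⟩
      refine ⟨⟨⟨ptrans p z, htransl z⟩, rfl⟩, ?_⟩
      show ptrans p z (OnePoint.some 0) = OnePoint.some z
      rw [ptrans_some, zero_add]
  set S2 := stabilizer ↥K (OnePoint.some (0 : ZMod p)) with hS2def
  have hcardS2 : Nat.card S2 = q := by
    have h1 := Subgroup.card_eq_card_quotient_mul_card_subgroup S2
    have h2 : Nat.card (↥K ⧸ S2) = p := by
      rw [← Nat.card_congr (orbitEquivQuotientStabilizer ↥K (OnePoint.some (0 : ZMod p))),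
        horb2, Nat.card_range_of_injective (some_injective (p := p)), Nat.card_zmod]
    rw [h2, hcardK] at h1
    exact (Nat.eq_of_mul_eq_mul_left (by omega) h1).symm
  -- injection from S2 into Hsub
  have hinj : ∃ f : ↥S2 → ↥Hsub, Function.Injective f := by
    have hdata : ∀ x : ↥S2, ∃ b : ZMod p, ∃ hb : b ≠ 0,
        (((x : ↥K) : ↥G) : Equiv.Perm (OnePoint (ZMod p))) = pmul p b hb := by
      intro x
      have hxG : (((x : ↥K) : ↥G) : Equiv.Perm (OnePoint (ZMod p))) ∈ G := ((x : ↥K) : ↥G).2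
      have hx0 : (((x : ↥K) : ↥G) : Equiv.Perm (OnePoint (ZMod p))) (OnePoint.some 0)
          = OnePoint.some 0 := x.2
      obtain ⟨b, hb, hbmul⟩ := stab_mult hp2 G htrans hcard htransl hxG (hKfix (x : ↥K)) hx0
      refine ⟨b, hb, ?_⟩
      apply Equiv.ext
      intro y
      rcases onePoint_cases y with h | ⟨z, h⟩ <;> subst h
      · rw [hKfix (x : ↥K), pmul_infty]
      · rw [hbmul z, pmul_some]
    choose bf hbf hbfmul using hdata
    refine ⟨fun x => ⟨Units.mk0 (bf x) (hbf x), ?_⟩, ?_⟩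
    · show pmul p _ _ ∈ G
      rw [pmul_congr _ (bf x) _ (hbf x) (Units.val_mk0 _), ← hbfmul x]
      exact ((x : ↥K) : ↥G).2
    · intro x y hxy
      have hbeq : bf x = bf y := by
        have := congrArg (fun u : ↥Hsub => ((u : (ZMod p)ˣ) : ZMod p)) hxy
        simpa using this
      have hperm : (((x : ↥K) : ↥G) : Equiv.Perm (OnePoint (ZMod p)))
          = (((y : ↥K) : ↥G) : Equiv.Perm (OnePoint (ZMod p))) := by
        rw [hbfmul x, hbfmul y, pmul_congr _ (bf y) _ (hbf y) hbeq]
      exact Subtype.ext (Subtype.ext (Subtype.ext hperm))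
  obtain ⟨f, hf⟩ := hinj
  have hcardle : q ≤ Nat.card Hsub := by
    rw [← hcardS2]
    exact Nat.card_le_card_of_injective f hf
  have hcardunits : Nat.card (ZMod p)ˣ = 2 * q := by
    rw [Nat.card_eq_fintype_card, ZMod.card_units_eq_totient, Nat.totient_prime hp, hq]
  have hdvd : Nat.card Hsub ∣ 2 * q := by
    rw [← hcardunits]
    exact Subgroup.card_subgroup_dvd_card Hsub
  set N := Nat.card Hsub with hNdef
  obtain ⟨m, hm⟩ := hdvd
  have hm2 : m ≤ 2 := by
    by_contra hcon
    have hm3 : 3 ≤ m := by omega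
    have h1 : N * 3 ≤ N * m := Nat.mul_le_mul_left N hm3
    have h3 : N * 3 ≤ 2 * q := by rw [hm]; exact h1
    omega
  have hNq : N = q ∨ N = 2 * q := by
    rcases m with _ | _ | _ | m
    · rw [Nat.mul_zero] at hm; omega
    · rw [Nat.mul_one] at hm; omega
    · omega
    · omega
  -- in either case squares are in Hsub
  set w : (ZMod p)ˣ := Units.mk0 s hs with hwdef
  have hwsq : w * w ∈ Hsub := by
    rcases hNq with hN | hN
    · -- index 2
      have hidx : Hsub.index = 2 := by
        have h4 := Subgroup.card_mul_index Hsub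
        rw [hcardunits, ← hNdef, hN] at h4
        exact Nat.eq_of_mul_eq_mul_left (by omega) (h4.trans (by ring))
      have := Subgroup.pow_index_mem Hsub w
      rw [hidx, sq] at this
      exact this
    · -- Hsub = ⊤
      have hidx : Hsub.index = 1 := by
        have h4 := Subgroup.card_mul_index Hsub
        rw [hcardunits, ← hNdef, hN] at h4
        exact Nat.eq_of_mul_eq_mul_left (show 0 < 2 * q by omega) (h4.trans (mul_one _).symm)
      have : Hsub = ⊤ := Subgroup.index_eq_one.mp hidx
      rw [this]
      trivial
  have hfin := (hmemHsub (w * w)).mp hwsq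
  rw [pmul_congr _ (s * s) _ (mul_ne_zero hs hs) (by simp [hwdef])] at hfin
  exact hfin

end AlphaAux

theorem alpha_has_order_three
    (p : ℕ) [Fact p.Prime] (hp2 : p ≠ 2) (hp3 : p % 4 = 3)
    (G : Subgroup (Equiv.Perm (OnePoint (ZMod p))))
    (htrans : ∀ x y : OnePoint (ZMod p), ∃ g ∈ G, g x = y)
    (hcard : Nat.card G = (p ^ 3 - p) / 2)
    (htransl : ∀ a : ZMod p, ptrans p a ∈ G)
    (lam : Equiv.Perm (OnePoint (ZMod p))) (hlamG : lam ∈ G)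
    (hlam0 : lam (OnePoint.some (0 : ZMod p)) = OnePoint.infty)
    (hlaminf : lam OnePoint.infty = OnePoint.some (0 : ZMod p))
    (hlam2 : orderOf lam = 2)
    (n : ℕ) (hn : Odd n) (c : ZMod p) (hcN : c ∈ Nset p)
    (hR : ∀ z ∈ Rset p, lam (OnePoint.some z) = OnePoint.some (c * z ^ n))
    (hN : ∀ z ∈ Nset p, lam (OnePoint.some z) = OnePoint.some (c⁻¹ * z ^ n))
    (hcn : c ^ n = c)
    (hcinv : (-c⁻¹ : ZMod p) ≠ 0)
    (α : Equiv.Perm (OnePoint (ZMod p)))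
    (hα : α = ptrans p 1 * pmul p (-c⁻¹) hcinv * lam) :
    α ∈ G ∧ orderOf α = 3 ∧
      (∀ z : ZMod p, α⁻¹ (OnePoint.some z) = lam (OnePoint.some (c * (1 - z)))) ∧
      α⁻¹ OnePoint.infty = lam OnePoint.infty := by
  classical
  have hp : p.Prime := Fact.out
  obtain ⟨hc0, hcsq⟩ := hcN
  -- lam is an involution
  have hlam_sq : lam * lam = 1 := by
    have h := pow_orderOf_eq_one lam
    rwa [hlam2, sq] at h
  have hlam_inv : lam⁻¹ = lam := inv_eq_of_mul_eq_one_right hlam_sq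
  -- evaluations of α
  have heval0 : α (OnePoint.some (0 : ZMod p)) = OnePoint.infty := by
    rw [hα]
    simp only [Equiv.Perm.mul_apply]
    rw [hlam0, AlphaAux.pmul_infty, AlphaAux.ptrans_infty]
  have hevalinf : α OnePoint.infty = OnePoint.some 1 := by
    rw [hα]
    simp only [Equiv.Perm.mul_apply]
    rw [hlaminf, AlphaAux.pmul_some, AlphaAux.ptrans_some, mul_zero, zero_add]
  have heval1 : α (OnePoint.some (1 : ZMod p)) = OnePoint.some 0 := by
    rw [hα]
    simp only [Equiv.Perm.mul_apply]
    rw [hR 1 ⟨one_ne_zero, IsSquare.one⟩, one_pow, mul_one, AlphaAux.pmul_some,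
      AlphaAux.ptrans_some, neg_mul, inv_mul_cancel₀ hc0, neg_add_cancel]
  -- -c⁻¹ is a square
  have hsqm : IsSquare (-c⁻¹ : ZMod p) := by
    have hm1 : ¬ IsSquare (-1 : ZMod p) := fun h => (ZMod.exists_sq_eq_neg_one_iff.mp h) hp3
    have h1 : quadraticChar (ZMod p) (-1) = -1 :=
      quadraticChar_neg_one_iff_not_isSquare.mpr hm1
    have h2 : quadraticChar (ZMod p) c = -1 :=
      quadraticChar_neg_one_iff_not_isSquare.mpr hcsq
    have h3 : quadraticChar (ZMod p) c⁻¹ * quadraticChar (ZMod p) c = 1 := by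
      rw [← map_mul, inv_mul_cancel₀ hc0, map_one]
    rw [h2, mul_neg_one] at h3
    have h4 : quadraticChar (ZMod p) (-c⁻¹) = 1 := by
      have : (-c⁻¹ : ZMod p) = -1 * c⁻¹ := by ring
      rw [this, map_mul, h1]
      omega
    exact (quadraticChar_one_iff_isSquare hcinv).mp h4
  obtain ⟨s, hsEq⟩ := hsqm
  have hs0 : s ≠ 0 := by
    intro h
    rw [h, mul_zero] at hsEq
    exact hcinv hsEq
  have hpmulG : pmul p (-c⁻¹) hcinv ∈ G := by
    have h := AlphaAux.pmul_sq_mem hp2 G htrans hcard htransl s hs0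
    rwa [AlphaAux.pmul_congr _ (-c⁻¹) _ hcinv hsEq.symm] at h
  have hαG : α ∈ G := by
    rw [hα]
    exact G.mul_mem (G.mul_mem (htransl 1) hpmulG) hlamG
  -- α has order 3
  have happ : ∀ x, (α ^ 3) x = α (α (α x)) := by
    intro x
    rw [show α ^ 3 = α * α * α by rw [pow_succ, pow_succ, pow_one]]
    simp [Equiv.Perm.mul_apply]
  have hα3 : α ^ 3 = 1 := by
    apply AlphaAux.eq_one_of_fixes hp2 G htrans hcard htransl (G.pow_mem hαG 3)
    · rw [happ, hevalinf, heval1, heval0]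
    · rw [happ, heval0, hevalinf, heval1]
    · rw [happ, heval1, heval0, hevalinf]
  have hneq : α ≠ 1 := by
    intro h
    rw [h] at heval0
    simp only [Equiv.Perm.one_apply] at heval0
    exact AlphaAux.some_ne_infty (p := p) 0 heval0
  haveI : Fact (Nat.Prime 3) := ⟨by norm_num⟩
  have hord3 : orderOf α = 3 := orderOf_eq_prime hα3 hneq
  -- the inverse
  have hinv : α⁻¹ = lam * (pmul p (-c⁻¹) hcinv)⁻¹ * (ptrans p 1)⁻¹ := by
    rw [hα, mul_inv_rev, mul_inv_rev, hlam_inv, mul_assoc]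
  have hNegInv : ((-c⁻¹ : ZMod p))⁻¹ = -c := by rw [inv_neg, inv_inv]
  refine ⟨hαG, hord3, ?_, ?_⟩
  · intro z
    rw [hinv]
    simp only [Equiv.Perm.mul_apply]
    rw [AlphaAux.ptrans_inv, AlphaAux.ptrans_some, AlphaAux.pmul_inv, AlphaAux.pmul_some,
      hNegInv]
    congr 2
    ring
  · rw [hinv]
    simp only [Equiv.Perm.mul_apply]
    rw [AlphaAux.ptrans_inv, AlphaAux.ptrans_infty, AlphaAux.pmul_inv, AlphaAux.pmul_infty]
end

section
/- Let F be a field with more than 3 elements. If M is a normal subgroup of SL₂(F) containing some matrix that is not a scalar multiple of the identity, then M = SL₂(F). Consequently PSL₂(F), the quotient of SL₂(F) by its center, is a simple group. -/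
open Matrix

namespace SL2Aux

variable {F : Type*} [Field F]

local notation "SL2" => Matrix.SpecialLinearGroup (Fin 2) F

lemma mem_of_mul_eq {G : Type*} [Group G] (M : Subgroup G) {x y t : G}
    (h : x * t = y) (hx : x ∈ M) (hy : y ∈ M) : t ∈ M := by
  have ht : t = x⁻¹ * y := by rw [← h]; group
  rw [ht]; exact M.mul_mem (M.inv_mem hx) hy

omit [Field F] in
lemma exists_ne3 (hF : 3 < Cardinal.mk F) (a b c : F) :
    ∃ x : F, x ≠ a ∧ x ≠ b ∧ x ≠ c := by
  by_contra h
  push_neg at h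
  have hsub : (Set.univ : Set F) ⊆ {a, b, c} := by
    intro x _
    by_cases h1 : x = a
    · simp [h1]
    by_cases h2 : x = b
    · simp [h2]
    simp [h x h1 h2]
  have h1 : Cardinal.mk F ≤ 3 := by
    have e1 : Cardinal.mk ({a, b, c} : Set F) ≤ 3 := by
      refine le_trans Cardinal.mk_insert_le ?_
      have e2 : Cardinal.mk ({b, c} : Set F) ≤ 2 := by
        refine le_trans Cardinal.mk_insert_le ?_
        rw [Cardinal.mk_singleton]
        norm_num
      calc Cardinal.mk ({b, c} : Set F) + 1 ≤ 2 + 1 := add_le_add e2 le_rfl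
        _ = 3 := by norm_num
    calc Cardinal.mk F = Cardinal.mk (Set.univ : Set F) := Cardinal.mk_univ.symm
      _ ≤ Cardinal.mk ({a, b, c} : Set F) := Cardinal.mk_le_mk_of_subset hsub
      _ ≤ 3 := e1
  exact absurd h1 (not_le.mpr hF)

lemma exists_sq_ne (hF : 3 < Cardinal.mk F) : ∃ x : F, x ≠ 0 ∧ x * x ≠ 1 := by
  obtain ⟨x, h0, h1, h2⟩ := exists_ne3 hF 0 1 (-1)
  refine ⟨x, h0, fun h => ?_⟩
  have hz : (x - 1) * (x + 1) = 0 := by ring_nf; rw [← h]; ring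
  rcases mul_eq_zero.mp hz with h' | h'
  · exact h1 (by linear_combination h')
  · exact h2 (by linear_combination h')

def elU (s : F) : Matrix.SpecialLinearGroup (Fin 2) F :=
  ⟨!![1, s; 0, 1], by simp [Matrix.det_fin_two_of]⟩

def elL (s : F) : Matrix.SpecialLinearGroup (Fin 2) F :=
  ⟨!![1, 0; s, 1], by simp [Matrix.det_fin_two_of]⟩

def elW : Matrix.SpecialLinearGroup (Fin 2) F :=
  ⟨!![0, 1; -1, 0], by simp [Matrix.det_fin_two_of]⟩

def dgel (a : F) (h : a ≠ 0) : Matrix.SpecialLinearGroup (Fin 2) F :=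
  ⟨!![a, 0; 0, a⁻¹], by simp [Matrix.det_fin_two_of, mul_inv_cancel₀ h]⟩

@[simp] lemma elU_coe (s : F) : ((elU s : SL2) : Matrix (Fin 2) (Fin 2) F) = !![1, s; 0, 1] := rfl
@[simp] lemma elL_coe (s : F) : ((elL s : SL2) : Matrix (Fin 2) (Fin 2) F) = !![1, 0; s, 1] := rfl
@[simp] lemma elW_coe : ((elW : SL2) : Matrix (Fin 2) (Fin 2) F) = !![0, 1; -1, 0] := rfl
@[simp] lemma dgel_coe (a : F) (h : a ≠ 0) :
    ((dgel a h : SL2) : Matrix (Fin 2) (Fin 2) F) = !![a, 0; 0, a⁻¹] := rfl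

lemma elU_mul (s t : F) : (elU s : SL2) * elU t = elU (s + t) := by
  apply Subtype.ext
  simp [Matrix.SpecialLinearGroup.coe_mul, Matrix.mul_fin_two, add_comm]

lemma elU_zero : (elU 0 : SL2) = 1 := by
  apply Subtype.ext
  simp [Matrix.SpecialLinearGroup.coe_one, ← Matrix.one_fin_two]

lemma elU_inv (s : F) : (elU s : SL2)⁻¹ = elU (-s) := by
  apply inv_eq_of_mul_eq_one_right
  rw [elU_mul]; simp [elU_zero]

lemma elL_mul (s t : F) : (elL s : SL2) * elL t = elL (s + t) := by
  apply Subtype.ext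
  simp [Matrix.SpecialLinearGroup.coe_mul, Matrix.mul_fin_two, add_comm]

lemma elL_zero : (elL 0 : SL2) = 1 := by
  apply Subtype.ext
  simp [Matrix.SpecialLinearGroup.coe_one, ← Matrix.one_fin_two]

lemma elL_inv (s : F) : (elL s : SL2)⁻¹ = elL (-s) := by
  apply inv_eq_of_mul_eq_one_right
  rw [elL_mul]; simp [elL_zero]

lemma dgel_inv (a : F) (h : a ≠ 0) :
    (dgel a h : SL2)⁻¹ = dgel a⁻¹ (inv_ne_zero h) := by
  apply inv_eq_of_mul_eq_one_right
  apply Subtype.ext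
  simp [Matrix.SpecialLinearGroup.coe_mul, Matrix.mul_fin_two,
    Matrix.SpecialLinearGroup.coe_one, ← Matrix.one_fin_two, mul_inv_cancel₀ h,
    inv_mul_cancel₀ h]

def elWi : Matrix.SpecialLinearGroup (Fin 2) F :=
  ⟨!![0, -1; 1, 0], by simp [Matrix.det_fin_two_of]⟩

@[simp] lemma elWi_coe : ((elWi : SL2) : Matrix (Fin 2) (Fin 2) F) = !![0, -1; 1, 0] := rfl

lemma elW_inv : (elW : SL2)⁻¹ = elWi := by
  apply inv_eq_of_mul_eq_one_right
  apply Subtype.ext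
  simp [Matrix.SpecialLinearGroup.coe_mul, Matrix.mul_fin_two,
    Matrix.SpecialLinearGroup.coe_one, ← Matrix.one_fin_two]

omit [Field F] in
lemma mat2_ext {a b c d a' b' c' d' : F} (h1 : a = a') (h2 : b = b') (h3 : c = c')
    (h4 : d = d') : !![a, b; c, d] = !![a', b'; c', d'] := by rw [h1, h2, h3, h4]

lemma scalar_mat (r : F) : r • (1 : Matrix (Fin 2) (Fin 2) F) = !![r, 0; 0, r] := by
  rw [Matrix.smul_one_eq_diagonal]
  ext i j
  fin_cases i <;> fin_cases j <;> simp [Matrix.diagonal_apply]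

lemma elW_conj_elU (s : F) : (elW : SL2) * elU (-s) * elW⁻¹ = elL s := by
  rw [elW_inv]
  apply Subtype.ext
  rw [Matrix.SpecialLinearGroup.coe_mul, Matrix.SpecialLinearGroup.coe_mul]
  show (!![0, 1; -1, 0] : Matrix (Fin 2) (Fin 2) F) * !![1, -s; 0, 1] * !![0, -1; 1, 0] = _
  rw [Matrix.mul_fin_two, Matrix.mul_fin_two]
  apply mat2_ext <;> ring

lemma dg_conj_elU (a s : F) (h : a ≠ 0) :
    (dgel a h : SL2) * elU s * (dgel a h)⁻¹ = elU (a * a * s) := by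
  rw [dgel_inv]
  apply Subtype.ext
  rw [Matrix.SpecialLinearGroup.coe_mul, Matrix.SpecialLinearGroup.coe_mul,
    dgel_coe, elU_coe, dgel_coe, Matrix.mul_fin_two, Matrix.mul_fin_two, elU_coe]
  apply mat2_ext <;> field_simp <;> ring

section Gen

variable (H : Subgroup (Matrix.SpecialLinearGroup (Fin 2) F))

lemma gen_c_ne (hu : ∀ s : F, elU s ∈ H) (hl : ∀ s : F, elL s ∈ H)
    (g : SL2) (hc : (g : Matrix (Fin 2) (Fin 2) F) 1 0 ≠ 0) :
    g ∈ H := by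
  set a := (g : Matrix (Fin 2) (Fin 2) F) 0 0 with ha
  set b := (g : Matrix (Fin 2) (Fin 2) F) 0 1 with hb
  set c := (g : Matrix (Fin 2) (Fin 2) F) 1 0 with hcd
  set d := (g : Matrix (Fin 2) (Fin 2) F) 1 1 with hd
  have hg : (g : Matrix (Fin 2) (Fin 2) F) = !![a, b; c, d] := Matrix.eta_fin_two _
  have hdet : a * d - b * c = 1 := by
    have h2 := g.property
    rw [Matrix.det_fin_two] at h2
    exact h2
  have key : g = elU ((a - 1) / c) * elL c * elU ((d - 1) / c) := by
    apply Subtype.ext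
    rw [Matrix.SpecialLinearGroup.coe_mul, Matrix.SpecialLinearGroup.coe_mul,
      elU_coe, elL_coe, elU_coe, hg, Matrix.mul_fin_two, Matrix.mul_fin_two]
    apply mat2_ext
    · field_simp
      ring
    · field_simp
      linear_combination (-1 - d) * hdet + d * hdet
    · field_simp
      ring
    · field_simp
      ring
  rw [key]
  exact H.mul_mem (H.mul_mem (hu _) (hl _)) (hu _)

lemma gen_top (hu : ∀ s : F, elU s ∈ H) (hl : ∀ s : F, elL s ∈ H) : H = ⊤ := by
  rw [Subgroup.eq_top_iff']
  intro g
  by_cases hc : (g : Matrix (Fin 2) (Fin 2) F) 1 0 ≠ 0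
  · exact gen_c_ne H hu hl g hc
  · push_neg at hc
    have hdet : (g : Matrix (Fin 2) (Fin 2) F) 0 0 * (g : Matrix (Fin 2) (Fin 2) F) 1 1 -
        (g : Matrix (Fin 2) (Fin 2) F) 0 1 * (g : Matrix (Fin 2) (Fin 2) F) 1 0 = 1 := by
      have h2 := g.property
      rw [Matrix.det_fin_two] at h2
      exact h2
    have hd : (g : Matrix (Fin 2) (Fin 2) F) 1 1 ≠ 0 := by
      intro h
      rw [h, hc] at hdet
      simp at hdet
    have hmem : g * elL 1 ∈ H := by
      apply gen_c_ne H hu hl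
      rw [Matrix.SpecialLinearGroup.coe_mul, elL_coe]
      rw [Matrix.mul_apply]
      simp [Fin.sum_univ_two, hc, hd]
    have key : g = (g * elL 1) * elL (-1) := by
      rw [mul_assoc, elL_mul]
      norm_num [elL_zero]
    rw [key]
    exact H.mul_mem hmem (hl _)

end Gen

section Normal

variable (M : Subgroup (Matrix.SpecialLinearGroup (Fin 2) F)) (hM : M.Normal)

include hM in
lemma top_of_allU (hu : ∀ s : F, elU s ∈ M) : M = ⊤ := by
  apply gen_top M hu
  intro s
  have h := hM.conj_mem (elU (-s)) (hu (-s)) elW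
  rwa [elW_conj_elU] at h

include hM in
lemma top_of_triangular (a b : F) (ha : a ≠ 0) (ha2 : a * a ≠ 1)
    (T : SL2) (hT : (T : Matrix (Fin 2) (Fin 2) F) = !![a, b; 0, a⁻¹]) (hTM : T ∈ M) :
    M = ⊤ := by
  apply top_of_allU M hM
  have hkey : ∀ t : F, T * elU t = elU (a * a * t) * T := by
    intro t
    apply Subtype.ext
    rw [Matrix.SpecialLinearGroup.coe_mul, Matrix.SpecialLinearGroup.coe_mul, hT,
      elU_coe, elU_coe, Matrix.mul_fin_two, Matrix.mul_fin_two]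
    apply mat2_ext <;> field_simp <;> ring
  have hmem : ∀ t : F, elU ((a * a - 1) * t) ∈ M := by
    intro t
    have h1 : elU t * T⁻¹ * (elU t)⁻¹ ∈ M := hM.conj_mem T⁻¹ (M.inv_mem hTM) (elU t)
    have h2 : T * (elU t * T⁻¹ * (elU t)⁻¹) ∈ M := M.mul_mem hTM h1
    have h3 : T * (elU t * T⁻¹ * (elU t)⁻¹) = elU ((a * a - 1) * t) := by
      calc T * (elU t * T⁻¹ * (elU t)⁻¹) = (T * elU t) * T⁻¹ * (elU t)⁻¹ := by group
        _ = (elU (a * a * t) * T) * T⁻¹ * (elU t)⁻¹ := by rw [hkey]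
        _ = elU (a * a * t) * (elU t)⁻¹ := by group
        _ = elU (a * a * t) * elU (-t) := by rw [elU_inv]
        _ = elU ((a * a - 1) * t) := by rw [elU_mul]; congr 1; ring
    rwa [h3] at h2
  intro s
  have ha2' : a * a - 1 ≠ 0 := sub_ne_zero.mpr ha2
  have h := hmem (s / (a * a - 1))
  rwa [mul_div_cancel₀ s ha2'] at h

include hM in
lemma top_of_elU (s : F) (hs : s ≠ 0) (h2 : (2 : F) ≠ 0) (hmem : elU s ∈ M) : M = ⊤ := by
  apply top_of_allU M hM
  have hsq : ∀ r : F, elU (r * r * s) ∈ M := by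
    intro r
    by_cases hr : r = 0
    · rw [hr, show (0 : F) * 0 * s = 0 by ring, elU_zero]
      exact M.one_mem
    · have h := hM.conj_mem (elU s) hmem (dgel r hr)
      rwa [dg_conj_elU] at h
  intro t
  set x := (t / s + 1) / 2 with hx
  set y := (t / s - 1) / 2 with hy
  have key : elU (x * x * s) * elU (-(y * y * s)) = elU t := by
    rw [elU_mul]
    congr 1
    rw [hx, hy]
    field_simp
    ring
  have hy' : elU (-(y * y * s)) ∈ M := by
    have h := M.inv_mem (hsq y)
    rwa [elU_inv] at h
  have hfin := M.mul_mem (hsq x) hy'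
  rwa [key] at hfin

include hM in
lemma Tx_mem (b δ d x : F) (hδ : δ ≠ 0) (hx : x ≠ 0) (hb : b * δ = -1)
    (B : SL2) (hB : (B : Matrix (Fin 2) (Fin 2) F) = !![0, b; δ, d]) (hBM : B ∈ M) :
    ∃ T : SL2, T ∈ M ∧
      (T : Matrix (Fin 2) (Fin 2) F) =
        !![x * x, d * b * (x⁻¹ * x⁻¹ - 1); 0, x⁻¹ * x⁻¹] := by
  set D := dgel x hx with hD
  refine ⟨⟨!![x * x, d * b * (x⁻¹ * x⁻¹ - 1); 0, x⁻¹ * x⁻¹], by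
    simp [Matrix.det_fin_two_of]; field_simp⟩, ?_, rfl⟩
  set T : SL2 := ⟨!![x * x, d * b * (x⁻¹ * x⁻¹ - 1); 0, x⁻¹ * x⁻¹], by
    simp [Matrix.det_fin_two_of]; field_simp⟩ with hT
  have hC : D⁻¹ * B * D⁻¹⁻¹ ∈ M := hM.conj_mem B hBM D⁻¹
  rw [inv_inv] at hC
  have hI : B * T = D⁻¹ * B * D := by
    apply Subtype.ext
    rw [Matrix.SpecialLinearGroup.coe_mul, Matrix.SpecialLinearGroup.coe_mul,
      Matrix.SpecialLinearGroup.coe_mul, hD, dgel_inv, dgel_coe, dgel_coe, hB]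
    show (!![0, b; δ, d] : Matrix (Fin 2) (Fin 2) F) *
        !![x * x, d * b * (x⁻¹ * x⁻¹ - 1); 0, x⁻¹ * x⁻¹] = _
    rw [Matrix.mul_fin_two, Matrix.mul_fin_two, Matrix.mul_fin_two]
    apply mat2_ext
    · field_simp
      ring
    · field_simp
      ring
    · field_simp
      ring
    · field_simp
      linear_combination (d * (1 - x ^ 2)) * hb
  exact mem_of_mul_eq M hI hBM hC

include hM in
lemma antitri_of_c (a b c d : F) (hc : c ≠ 0)
    (A : SL2) (hA : (A : Matrix (Fin 2) (Fin 2) F) = !![a, b; c, d]) (hAM : A ∈ M) :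
    ∃ B : SL2, B ∈ M ∧ (B : Matrix (Fin 2) (Fin 2) F) = !![0, -c⁻¹; c, a + d] := by
  have hdet : a * d - b * c = 1 := by
    have h2 := A.property
    rw [hA, Matrix.det_fin_two_of] at h2
    exact h2
  refine ⟨elU (-(a / c)) * A * (elU (-(a / c)))⁻¹, hM.conj_mem A hAM _, ?_⟩
  rw [elU_inv, Matrix.SpecialLinearGroup.coe_mul, Matrix.SpecialLinearGroup.coe_mul,
    elU_coe, elU_coe, hA, Matrix.mul_fin_two, Matrix.mul_fin_two]
  apply mat2_ext
  · field_simp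
    ring
  · field_simp
    linear_combination (-1 : F) * hdet
  · field_simp
    ring
  · field_simp
    ring

include hM in
lemma antitri_mem (A : SL2) (hAM : A ∈ M)
    (hnc : ¬ ∃ r : F, (A : Matrix (Fin 2) (Fin 2) F) = r • (1 : Matrix (Fin 2) (Fin 2) F)) :
    ∃ B : SL2, B ∈ M ∧ ∃ b δ : F, δ ≠ 0 ∧
      (B : Matrix (Fin 2) (Fin 2) F) =
        !![0, b; δ, (A : Matrix (Fin 2) (Fin 2) F) 0 0 + (A : Matrix (Fin 2) (Fin 2) F) 1 1] := by
  set a := (A : Matrix (Fin 2) (Fin 2) F) 0 0 with ha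
  set b := (A : Matrix (Fin 2) (Fin 2) F) 0 1 with hb
  set c := (A : Matrix (Fin 2) (Fin 2) F) 1 0 with hc'
  set d := (A : Matrix (Fin 2) (Fin 2) F) 1 1 with hd
  have hA : (A : Matrix (Fin 2) (Fin 2) F) = !![a, b; c, d] := Matrix.eta_fin_two _
  by_cases hc : c ≠ 0
  · obtain ⟨B, hBM, hBc⟩ := antitri_of_c M hM a b c d hc A hA hAM
    exact ⟨B, hBM, -c⁻¹, c, hc, hBc⟩
  push_neg at hc
  by_cases hbne : b ≠ 0
  · -- conjugate by elW
    have hA'M : elW * A * (elW : SL2)⁻¹ ∈ M := hM.conj_mem A hAM elW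
    have hA'c : ((elW * A * (elW : SL2)⁻¹ : SL2) : Matrix (Fin 2) (Fin 2) F) =
        !![d, -c; -b, a] := by
      rw [elW_inv, Matrix.SpecialLinearGroup.coe_mul, Matrix.SpecialLinearGroup.coe_mul,
        elW_coe, hA]
      show (!![0, 1; -1, 0] : Matrix (Fin 2) (Fin 2) F) * !![a, b; c, d] * !![0, -1; 1, 0] = _
      rw [Matrix.mul_fin_two, Matrix.mul_fin_two]
      apply mat2_ext <;> ring
    rw [hc] at hA'c
    have hA'c2 : ((elW * A * (elW : SL2)⁻¹ : SL2) : Matrix (Fin 2) (Fin 2) F) =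
        !![d, -0; -b, a] := hA'c
    obtain ⟨B, hBM, hBc⟩ := antitri_of_c M hM d (-0) (-b) a (neg_ne_zero.mpr hbne) _ hA'c2 hA'M
    rw [show d + a = a + d from add_comm d a] at hBc
    exact ⟨B, hBM, -(-b)⁻¹, -b, neg_ne_zero.mpr hbne, hBc⟩
  · -- diagonal case
    push_neg at hbne
    have had : a ≠ d := by
      intro h
      apply hnc
      refine ⟨a, ?_⟩
      rw [hA, hc, hbne, scalar_mat, h]
    have hA'M : elL (-1) * A * (elL (-1) : SL2)⁻¹ ∈ M := hM.conj_mem A hAM (elL (-1))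
    have hA'c : ((elL (-1) * A * (elL (-1) : SL2)⁻¹ : SL2) : Matrix (Fin 2) (Fin 2) F) =
        !![a, b; d - a, d] := by
      rw [elL_inv, Matrix.SpecialLinearGroup.coe_mul, Matrix.SpecialLinearGroup.coe_mul,
        elL_coe, elL_coe, hA, hc, hbne, Matrix.mul_fin_two, Matrix.mul_fin_two]
      apply mat2_ext <;> ring
    rw [hbne] at hA'c
    obtain ⟨B, hBM, hBc⟩ := antitri_of_c M hM a 0 (d - a) d
      (sub_ne_zero.mpr (Ne.symm had)) _ hA'c hA'M
    exact ⟨B, hBM, -(d - a)⁻¹, d - a, sub_ne_zero.mpr (Ne.symm had), hBc⟩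

include hM in
lemma top_bad_dne (hF : 3 < Cardinal.mk F) (hx4 : ∀ x : F, x ≠ 0 → x * x * (x * x) = 1)
    (b δ d : F) (hδ : δ ≠ 0) (hd : d ≠ 0)
    (B : SL2) (hB : (B : Matrix (Fin 2) (Fin 2) F) = !![0, b; δ, d]) (hBM : B ∈ M) :
    M = ⊤ := by
  have hb : b * δ = -1 := by
    have h2 := B.property
    rw [hB, Matrix.det_fin_two_of] at h2
    linear_combination -h2
  obtain ⟨x₀, hx0, hx1⟩ := exists_sq_ne hF
  have hsq : x₀ * x₀ = -1 := by
    have h4 := hx4 x₀ hx0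
    have hz : (x₀ * x₀ - 1) * (x₀ * x₀ + 1) = 0 := by linear_combination h4
    rcases mul_eq_zero.mp hz with h' | h'
    · exact absurd (by linear_combination h') hx1
    · linear_combination h'
  have h2 : (2 : F) ≠ 0 := by
    intro h
    exact hx1 (by linear_combination hsq - h)
  have hinv : x₀⁻¹ * x₀⁻¹ = -1 := by
    rw [← mul_inv, hsq, inv_neg, inv_one]
  obtain ⟨T, hTM, hTc⟩ := Tx_mem M hM b δ d x₀ hδ hx0 hb B hB hBM
  rw [hsq, hinv] at hTc
  have hbne : b ≠ 0 := by
    intro h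
    rw [h, zero_mul] at hb
    exact absurd hb.symm (by norm_num)
  have hTT : T * T = elU (4 * (d * b)) := by
    apply Subtype.ext
    rw [Matrix.SpecialLinearGroup.coe_mul, hTc, elU_coe, Matrix.mul_fin_two]
    apply mat2_ext <;> ring
  have hmem : elU (4 * (d * b)) ∈ M := by
    rw [← hTT]; exact M.mul_mem hTM hTM
  have h4 : (4 : F) ≠ 0 := by
    have : (4 : F) = 2 * 2 := by norm_num
    rw [this]
    exact mul_ne_zero h2 h2
  exact top_of_elU M hM _ (mul_ne_zero h4 (mul_ne_zero hd hbne)) h2 hmem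

include hM in
lemma top_of_antitri (hF : 3 < Cardinal.mk F) (b δ d : F) (hδ : δ ≠ 0)
    (B : SL2) (hB : (B : Matrix (Fin 2) (Fin 2) F) = !![0, b; δ, d]) (hBM : B ∈ M) :
    M = ⊤ := by
  have hb : b * δ = -1 := by
    have h2 := B.property
    rw [hB, Matrix.det_fin_two_of] at h2
    linear_combination -h2
  by_cases hex : ∃ x : F, x ≠ 0 ∧ (x * x) * (x * x) ≠ 1
  · obtain ⟨x, hx, hx4⟩ := hex
    obtain ⟨T, hTM, hTc⟩ := Tx_mem M hM b δ d x hδ hx hb B hB hBM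
    have hTc' : (T : Matrix (Fin 2) (Fin 2) F) =
        !![x * x, d * b * (x⁻¹ * x⁻¹ - 1); 0, (x * x)⁻¹] := by
      rw [hTc]
      apply mat2_ext
      · rfl
      · rfl
      · rfl
      · rw [mul_inv]
    exact top_of_triangular M hM (x * x) _ (mul_ne_zero hx hx) hx4 T hTc' hTM
  · push_neg at hex
    by_cases hd : d ≠ 0
    · exact top_bad_dne M hM hF hex b δ d hδ hd B hB hBM
    · push_neg at hd
      subst hd
      -- get char ≠ 2 facts
      obtain ⟨x₀, hx0, hx1⟩ := exists_sq_ne hF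
      have hsq : x₀ * x₀ = -1 := by
        have h4 := hex x₀ hx0
        have hz : (x₀ * x₀ - 1) * (x₀ * x₀ + 1) = 0 := by linear_combination h4
        rcases mul_eq_zero.mp hz with h' | h'
        · exact absurd (by linear_combination h') hx1
        · linear_combination h'
      have h2 : (2 : F) ≠ 0 := by
        intro h
        exact hx1 (by linear_combination hsq - h)
      -- choose y with y ≠ 0 and δ*δ*(y*y) ≠ -2
      obtain ⟨y, hy0, hyne⟩ : ∃ y : F, y ≠ 0 ∧ δ * δ * (y * y) ≠ -2 := by
        by_cases hc1 : δ * δ ≠ -2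
        · refine ⟨1, one_ne_zero, ?_⟩
          rw [show (1 : F) * 1 = 1 from one_mul 1, mul_one]
          exact hc1
        · push_neg at hc1
          refine ⟨x₀, hx0, ?_⟩
          rw [hsq, hc1]
          intro h
          have h4 : (2 : F) * 2 = 0 := by linear_combination h
          rcases mul_eq_zero.mp h4 with h' | h' <;> exact h2 h'
      -- C = (elU y * B * (elU y)⁻¹) * B
      have hCM : (elU y * B * (elU y)⁻¹) * B ∈ M :=
        M.mul_mem (hM.conj_mem B hBM (elU y)) hBM
      have hCc : (((elU y * B * (elU y)⁻¹) * B : SL2) : Matrix (Fin 2) (Fin 2) F) =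
          !![-(δ * δ * (y * y)) - 1, -y; -(δ * δ * y), -1] := by
        rw [elU_inv, Matrix.SpecialLinearGroup.coe_mul, Matrix.SpecialLinearGroup.coe_mul,
          Matrix.SpecialLinearGroup.coe_mul, elU_coe, elU_coe, hB,
          Matrix.mul_fin_two, Matrix.mul_fin_two, Matrix.mul_fin_two]
        apply mat2_ext
        · linear_combination hb
        · linear_combination y * hb
        · ring
        · linear_combination hb
      obtain ⟨B', hB'M, hB'c⟩ := antitri_of_c M hM (-(δ * δ * (y * y)) - 1) (-y)
        (-(δ * δ * y)) (-1) (neg_ne_zero.mpr (mul_ne_zero (mul_ne_zero hδ hδ) hy0))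
        _ hCc hCM
      have hd' : -(δ * δ * (y * y)) - 1 + -1 ≠ 0 := by
        intro h
        apply hyne
        linear_combination -h
      exact top_bad_dne M hM hF hex _ _ _
        (neg_ne_zero.mpr (mul_ne_zero (mul_ne_zero hδ hδ) hy0)) hd' B' hB'c hB'M

include hM in
lemma top_of_noncentral (hF : 3 < Cardinal.mk F) (A : SL2) (hAM : A ∈ M)
    (hnc : ¬ ∃ r : F, (A : Matrix (Fin 2) (Fin 2) F) = r • (1 : Matrix (Fin 2) (Fin 2) F)) :
    M = ⊤ := by
  obtain ⟨B, hBM, b, δ, hδ, hBc⟩ := antitri_mem M hM A hAM hnc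
  exact top_of_antitri M hM hF b δ _ hδ B hBc hBM

end Normal

end SL2Aux

theorem SL2_normal_subgroup_and_PSL2_simple
    (F : Type*) [Field F] (hF : 3 < Cardinal.mk F) :
    (∀ M : Subgroup (Matrix.SpecialLinearGroup (Fin 2) F), M.Normal →
      (∃ A ∈ M, ¬ ∃ r : F, (A : Matrix (Fin 2) (Fin 2) F) = r • (1 : Matrix (Fin 2) (Fin 2) F)) →
      M = ⊤) ∧
    IsSimpleGroup (Matrix.SpecialLinearGroup (Fin 2) F ⧸
      Subgroup.center (Matrix.SpecialLinearGroup (Fin 2) F)) := by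
  have part1 : ∀ M : Subgroup (Matrix.SpecialLinearGroup (Fin 2) F), M.Normal →
      (∃ A ∈ M, ¬ ∃ r : F, (A : Matrix (Fin 2) (Fin 2) F) = r • (1 : Matrix (Fin 2) (Fin 2) F)) →
      M = ⊤ := by
    intro M hM ⟨A, hAM, hnc⟩
    exact SL2Aux.top_of_noncentral M hM hF A hAM hnc
  refine ⟨part1, ?_⟩
  have hns : SL2Aux.elU (1 : F) ∉ Subgroup.center (Matrix.SpecialLinearGroup (Fin 2) F) := by
    intro h
    obtain ⟨r, hr1, hr2⟩ := Matrix.SpecialLinearGroup.mem_center_iff.mp h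
    have h01 := congr_fun (congr_fun hr2 0) 1
    simp [Matrix.scalar_apply, SL2Aux.elU, Matrix.diagonal_apply] at h01
  haveI hnt : Nontrivial (Matrix.SpecialLinearGroup (Fin 2) F ⧸
      Subgroup.center (Matrix.SpecialLinearGroup (Fin 2) F)) := by
    refine ⟨⟨QuotientGroup.mk (SL2Aux.elU 1), 1, ?_⟩⟩
    rw [Ne, QuotientGroup.eq_one_iff]
    exact hns
  refine ⟨fun H hH => ?_⟩
  set φ := QuotientGroup.mk' (Subgroup.center (Matrix.SpecialLinearGroup (Fin 2) F)) with hφ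
  have hsurj : Function.Surjective φ := QuotientGroup.mk'_surjective _
  set M := H.comap φ with hMdef
  have hMn : M.Normal := hH.comap φ
  have hmap : Subgroup.map φ M = H := Subgroup.map_comap_eq_self_of_surjective hsurj H
  by_cases hex : ∃ A ∈ M, ¬ ∃ r : F,
      (A : Matrix (Fin 2) (Fin 2) F) = r • (1 : Matrix (Fin 2) (Fin 2) F)
  · right
    have hMtop : M = ⊤ := part1 M hMn hex
    rw [← hmap, hMtop]
    exact Subgroup.map_top_of_surjective φ hsurj
  · left
    push_neg at hex
    rw [Subgroup.eq_bot_iff_forall]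
    intro x hx
    rw [← hmap] at hx
    obtain ⟨a, haM, rfl⟩ := hx
    have hcentral : a ∈ Subgroup.center (Matrix.SpecialLinearGroup (Fin 2) F) := by
      obtain ⟨r, hr⟩ := hex a haM
      apply Matrix.SpecialLinearGroup.mem_center_iff.mpr
      refine ⟨r, ?_, ?_⟩
      · have hd := a.property
        rw [hr, Matrix.det_smul, Matrix.det_one] at hd
        simpa using hd
      · rw [show ((Matrix.scalar (Fin 2)) r) = r • (1 : Matrix (Fin 2) (Fin 2) F) by
          rw [Matrix.smul_one_eq_diagonal]; rfl, ← hr]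
    show φ a = 1
    rw [hφ, QuotientGroup.mk'_apply]
    exact (QuotientGroup.eq_one_iff a).mpr hcentral
end
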